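/- arXiv:2406.11298 — 7 statements merged into one kernel-verified Lean document; each statement's English description precedes it below -/
import Mathlib

section
/- Let -∞ ≤ a < b ≤ ∞, let n ∈ ℤ, let {x_k}_{k=n}^∞ ⊂ (a,b) be a strictly increasing sequence, and let {τ_k}_{k=n+1}^∞ be a geometrically decreasing sequence of positive numbers, i.e. sup_{k≥n+1} τ_{k+1}/τ_k < 1. Then there exist positive constants c₁, c₂ (depending only on the geometric decay ratio) such that for every nonnegative measurable function g on (a,b): c₁ · sup_{k≥n+1} τ_k ∫_{x_{k-1}}^{x_k} g ≤ sup_{k≥n+1} τ_k ∫_{x_n}^{x_k} g ≤ c₂ · sup_{k≥n+1} τ_k ∫_{x_{k-1}}^{x_k} g. -/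
open MeasureTheory ENNReal Set

noncomputable section

/-- The open interval `(a, b)` of real numbers, with extended-real endpoints. -/
def Iab (a b : EReal) : Set ℝ := {x : ℝ | a < (x : EReal) ∧ (x : EReal) < b}

theorem statement8 (ρ : ℝ≥0∞) (hρ : ρ < 1) :
    ∃ c₁ c₂ : ℝ≥0∞, 0 < c₁ ∧ c₂ < ∞ ∧
      ∀ (a b : EReal), a < b →
      ∀ (n : ℤ) (x : ℤ → ℝ) (τ : ℤ → ℝ≥0∞),
        (∀ k, n ≤ k → x k ∈ Iab a b) →
        (∀ k, n ≤ k → x k < x (k + 1)) →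
        (∀ k, n + 1 ≤ k → 0 < τ k ∧ τ k < ∞) →
        (∀ k, n + 1 ≤ k → τ (k + 1) ≤ ρ * τ k) →
        ∀ g : ℝ → ℝ≥0∞, Measurable g →
          c₁ * (⨆ (k : ℤ) (_ : n + 1 ≤ k), τ k * ∫⁻ s in Ioo (x (k - 1)) (x k), g s) ≤
              (⨆ (k : ℤ) (_ : n + 1 ≤ k), τ k * ∫⁻ s in Ioo (x n) (x k), g s) ∧
            (⨆ (k : ℤ) (_ : n + 1 ≤ k), τ k * ∫⁻ s in Ioo (x n) (x k), g s) ≤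
              c₂ * ⨆ (k : ℤ) (_ : n + 1 ≤ k), τ k * ∫⁻ s in Ioo (x (k - 1)) (x k), g s := by
  have hρ1 : (1 : ℝ≥0∞) - ρ ≠ 0 := (tsub_pos_of_lt hρ).ne'
  have hρ2 : (1 : ℝ≥0∞) - ρ ≠ ∞ := (tsub_le_self.trans_lt one_lt_top).ne
  refine ⟨1, (1 - ρ)⁻¹, one_pos, ENNReal.inv_lt_top.2 (tsub_pos_of_lt hρ), ?_⟩
  intro a b hab n x τ hxab hxi hτ hτρ g hg
  have hle : ∀ j k : ℤ, n ≤ j → j ≤ k → x j ≤ x k := by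
    intro j k hnj
    exact Int.le_induction (motive := fun k _ => x j ≤ x k) le_rfl (fun m hm ih => ih.trans (hxi m (hnj.trans hm)).le) k
  set S := ⨆ (k : ℤ) (_ : n + 1 ≤ k), τ k * ∫⁻ s in Ioo (x (k - 1)) (x k), g s with hS
  have hterm : ∀ k : ℤ, n + 1 ≤ k →
      τ k * ∫⁻ s in Ioo (x (k - 1)) (x k), g s ≤ S := fun k hk =>
    le_iSup₂ (f := fun (k : ℤ) (_ : n + 1 ≤ k) =>
      τ k * ∫⁻ s in Ioo (x (k - 1)) (x k), g s) k hk
  have hone : (1 : ℝ≥0∞) ≤ (1 - ρ)⁻¹ := ENNReal.one_le_inv.2 tsub_le_self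
  have hkey : ρ * (1 - ρ)⁻¹ + 1 = (1 - ρ)⁻¹ := by
    have h1 : ρ * (1 - ρ)⁻¹ + (1 - ρ) * (1 - ρ)⁻¹ = (1 - ρ)⁻¹ := by
      rw [← add_mul, add_tsub_cancel_of_le hρ.le, one_mul]
    rwa [ENNReal.mul_inv_cancel hρ1 hρ2] at h1
  -- splitting lemma
  have hsplit : ∀ m : ℤ, n ≤ m →
      (∫⁻ s in Ioo (x n) (x (m + 1)), g s) =
        (∫⁻ s in Ioo (x n) (x m), g s) + ∫⁻ s in Ioo (x m) (x (m + 1)), g s := by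
    intro m hm
    have h1 : x n ≤ x m := hle n m le_rfl hm
    have h2 : x m ≤ x (m + 1) := (hxi m hm).le
    have e1 : (∫⁻ s in Ioo (x n) (x (m + 1)), g s) = ∫⁻ s in Ioc (x n) (x (m + 1)), g s :=
      setLIntegral_congr Ioo_ae_eq_Ioc
    have e2 : (∫⁻ s in Ioo (x n) (x m), g s) = ∫⁻ s in Ioc (x n) (x m), g s :=
      setLIntegral_congr Ioo_ae_eq_Ioc
    have e3 : (∫⁻ s in Ioo (x m) (x (m + 1)), g s) = ∫⁻ s in Ioc (x m) (x (m + 1)), g s :=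
      setLIntegral_congr Ioo_ae_eq_Ioc
    rw [e1, e2, e3, ← Ioc_union_Ioc_eq_Ioc h1 h2,
      lintegral_union measurableSet_Ioc (Ioc_disjoint_Ioc_of_le le_rfl)]
  constructor
  · rw [one_mul]
    refine iSup_mono fun k => iSup_mono' fun hk => ⟨hk, ?_⟩
    exact mul_le_mul_right (lintegral_mono' (Measure.restrict_mono
      (Ioo_subset_Ioo_left (hle n (k - 1) le_rfl (by omega))) le_rfl) le_rfl) _
  · refine iSup₂_le ?_
    refine Int.le_induction ?_ ?_
    · calc τ (n + 1) * ∫⁻ s in Ioo (x n) (x (n + 1)), g s ≤ S := by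
            simpa using hterm (n + 1) le_rfl
        _ ≤ (1 - ρ)⁻¹ * S := le_mul_of_one_le_left zero_le hone
    · intro m hm ih
      have hnm : n ≤ m := by omega
      have hseg : τ (m + 1) * ∫⁻ s in Ioo (x m) (x (m + 1)), g s ≤ S := by
        simpa using hterm (m + 1) (by omega)
      calc τ (m + 1) * ∫⁻ s in Ioo (x n) (x (m + 1)), g s
          = τ (m + 1) * (∫⁻ s in Ioo (x n) (x m), g s)
            + τ (m + 1) * ∫⁻ s in Ioo (x m) (x (m + 1)), g s := by
            rw [hsplit m hnm, mul_add]
        _ ≤ (ρ * τ m) * (∫⁻ s in Ioo (x n) (x m), g s) + S :=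
            add_le_add (mul_le_mul_left (hτρ m hm) _) hseg
        _ = ρ * (τ m * ∫⁻ s in Ioo (x n) (x m), g s) + S := by rw [mul_assoc]
        _ ≤ ρ * ((1 - ρ)⁻¹ * S) + S := add_le_add_left (mul_le_mul_right ih ρ) S
        _ = (ρ * (1 - ρ)⁻¹ + 1) * S := by rw [add_mul, one_mul, mul_assoc]
        _ = (1 - ρ)⁻¹ * S := by rw [hkey]
end
end

section
/- Let -∞ ≤ a < b ≤ ∞, let α > 0, let n ∈ ℤ, let {x_k}_{k=n}^∞ ⊂ (a,b) be a strictly increasing sequence, and let {τ_k}_{k=n+1}^∞ be a geometrically decreasing sequence of positive numbers, i.e. sup_{k≥n+1} τ_{k+1}/τ_k < 1. Then there exist positive constants c₁, c₂ (depending only on α and the geometric decay ratio) such that for every nonnegative measurable function g on (a,b): c₁ · Σ_{k=n+1}^∞ τ_k (∫_{x_{k-1}}^{x_k} g)^α ≤ Σ_{k=n+1}^∞ τ_k (∫_{x_n}^{x_k} g)^α ≤ c₂ · Σ_{k=n+1}^∞ τ_k (∫_{x_{k-1}}^{x_k} g)^α. -/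
open MeasureTheory ENNReal Set

noncomputable section

private lemma sum_rpow_le' {α : ℝ} (hα0 : 0 < α) (hα1 : α ≤ 1) {ι : Type*} (s : Finset ι)
    (a : ι → ℝ≥0∞) : (∑ j ∈ s, a j) ^ α ≤ ∑ j ∈ s, a j ^ α := by
  induction s using Finset.cons_induction with
  | empty => simp [ENNReal.zero_rpow_of_pos hα0]
  | cons x s hx ih =>
      rw [Finset.sum_cons, Finset.sum_cons]
      exact (ENNReal.rpow_add_le_add_rpow _ _ hα0.le hα1).trans (add_le_add le_rfl ih)

private lemma holder_aux' {α : ℝ} (hα : 1 < α) {θ : ℝ≥0∞} (hθ0 : θ ≠ 0) (hθ1 : θ < 1)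
    (a : ℕ → ℝ≥0∞) (i : ℕ) :
    (∑ j ∈ Finset.range (i+1), a j) ^ α ≤
      (1 - θ)⁻¹ ^ (α - 1) * ∑ j ∈ Finset.range (i+1), ((θ ^ (α-1))⁻¹) ^ (i - j) * a j ^ α := by
  have hθtop : θ ≠ ∞ := (hθ1.trans ENNReal.one_lt_top).ne
  set s := Finset.range (i+1) with hs
  set W : ℝ≥0∞ := ∑ j ∈ s, θ ^ (i - j) with hWdef
  have hW0 : W ≠ 0 := by
    have h1 : (1 : ℝ≥0∞) ≤ W := by
      have : θ ^ (i - i) ≤ W :=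
        Finset.single_le_sum (f := fun j => θ ^ (i - j)) (fun j _ => zero_le ..)
          (Finset.self_mem_range_succ i)
      simpa using this
    exact fun h => by simp [h] at h1
  have hWtop : W ≠ ∞ :=
    (ENNReal.sum_lt_top.mpr fun j _ => (ENNReal.pow_ne_top hθtop).lt_top).ne
  have hWle : W ≤ (1 - θ)⁻¹ := by
    have hrefl : W = ∑ m ∈ s, θ ^ m := by
      rw [hWdef, hs, ← Finset.sum_range_reflect (fun m => θ ^ m) (i+1)]
      exact Finset.sum_congr rfl fun j _ => by norm_num
    rw [hrefl, ← ENNReal.tsum_geometric]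
    exact ENNReal.sum_le_tsum s
  set w : ℕ → ℝ≥0∞ := fun j => θ ^ (i - j) * W⁻¹ with hwdef
  have hw_sum : ∑ j ∈ s, w j = 1 := by
    rw [hwdef, ← Finset.sum_mul, ← hWdef, ENNReal.mul_inv_cancel hW0 hWtop]
  have hw0 : ∀ j, w j ≠ 0 := fun j =>
    mul_ne_zero (pow_ne_zero _ hθ0) (ENNReal.inv_ne_zero.mpr hWtop)
  have hwtop : ∀ j, w j ≠ ∞ := fun j =>
    ENNReal.mul_ne_top (ENNReal.pow_ne_top hθtop) (ENNReal.inv_ne_top.mpr hW0)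
  have hwz : ∀ j, w j * (a j * (w j)⁻¹) = a j := fun j => by
    rw [mul_comm (a j), ← mul_assoc, ENNReal.mul_inv_cancel (hw0 j) (hwtop j), one_mul]
  have key := ENNReal.rpow_arith_mean_le_arith_mean_rpow s w (fun j => a j * (w j)⁻¹)
    hw_sum hα.le
  have hterm : ∀ j, w j * (a j * (w j)⁻¹) ^ α = w j ^ (1 - α) * a j ^ α := by
    intro j
    rw [ENNReal.mul_rpow_of_nonneg _ _ (by positivity : (0:ℝ) ≤ α), ENNReal.inv_rpow]
    have : w j * (a j ^ α * (w j ^ α)⁻¹) = (w j ^ (1:ℝ) * (w j ^ α)⁻¹) * a j ^ α := by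
      rw [ENNReal.rpow_one]; ring
    rw [this, ← ENNReal.rpow_neg, ← ENNReal.rpow_add _ _ (hw0 j) (hwtop j)]
    norm_num [sub_eq_add_neg]
  have hwpow : ∀ j, w j ^ (1 - α) = W ^ (α - 1) * ((θ ^ (α-1))⁻¹) ^ (i - j) := by
    intro j
    rw [hwdef]
    rw [ENNReal.mul_rpow_of_ne_top (ENNReal.pow_ne_top hθtop) (ENNReal.inv_ne_top.mpr hW0)]
    have h1 : (θ ^ (i - j) : ℝ≥0∞) ^ (1 - α) = ((θ ^ (α-1))⁻¹) ^ (i - j) := by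
      rw [← ENNReal.rpow_natCast θ (i - j), ← ENNReal.rpow_mul,
        mul_comm ((i - j : ℕ) : ℝ), ENNReal.rpow_mul,
        show (1 - α) = -(α - 1) by ring, ENNReal.rpow_neg, ENNReal.rpow_natCast]
    have h2 : (W⁻¹) ^ (1 - α) = W ^ (α - 1) := by
      rw [ENNReal.inv_rpow, ← ENNReal.rpow_neg, show -(1-α) = α - 1 by ring]
    rw [h1, h2]; ring
  calc (∑ j ∈ s, a j) ^ α
      = (∑ j ∈ s, w j * (a j * (w j)⁻¹)) ^ α := by simp_rw [hwz]
    _ ≤ ∑ j ∈ s, w j * (a j * (w j)⁻¹) ^ α := key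
    _ = ∑ j ∈ s, W ^ (α - 1) * (((θ ^ (α-1))⁻¹) ^ (i - j) * a j ^ α) := by
        refine Finset.sum_congr rfl fun j _ => ?_
        rw [hterm j, hwpow j]; ring
    _ = W ^ (α - 1) * ∑ j ∈ s, ((θ ^ (α-1))⁻¹) ^ (i - j) * a j ^ α := by
        rw [Finset.mul_sum]
    _ ≤ (1 - θ)⁻¹ ^ (α - 1) * ∑ j ∈ s, ((θ ^ (α-1))⁻¹) ^ (i - j) * a j ^ α := by
        exact mul_le_mul_left (ENNReal.rpow_le_rpow hWle (by linarith)) _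

private lemma key_aux' {α : ℝ} (hα : 0 < α) {ρ : ℝ≥0∞} (hρ : ρ < 1) :
    ∃ C : ℝ≥0∞, C ≠ ∞ ∧ ∀ (t a : ℕ → ℝ≥0∞), (∀ i, t (i+1) ≤ ρ * t i) →
      ∑' i, t i * (∑ j ∈ Finset.range (i+1), a j) ^ α ≤ C * ∑' j, t j * a j ^ α := by
  have hρtop : ρ ≠ ∞ := (hρ.trans ENNReal.one_lt_top).ne
  obtain ⟨K, ψ, hK, hψ, hr, hH⟩ :
      ∃ K ψ : ℝ≥0∞, K ≠ ∞ ∧ ψ ≠ ∞ ∧ ρ * ψ < 1 ∧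
        ∀ (a : ℕ → ℝ≥0∞) (i : ℕ),
          (∑ j ∈ Finset.range (i+1), a j) ^ α ≤
            K * ∑ j ∈ Finset.range (i+1), ψ ^ (i - j) * a j ^ α := by
    rcases le_or_gt α 1 with h1 | h1
    · refine ⟨1, 1, one_ne_top, one_ne_top, by simpa using hρ, fun a i => ?_⟩
      simpa using sum_rpow_le' hα h1 _ a
    · set σ : ℝ≥0∞ := (1 + ρ) / 2 with hσdef
      have hσ0 : σ ≠ 0 := by
        simp [hσdef, ENNReal.div_eq_zero_iff]
      have hσtop : σ ≠ ∞ :=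
        (ENNReal.div_lt_top (by simp [hρtop]) (by norm_num)).ne
      have hσ1 : σ < 1 := by
        rw [hσdef, ENNReal.div_lt_iff (Or.inl (by norm_num)) (Or.inl (by norm_num))]
        calc 1 + ρ < 1 + 1 := by
              exact ENNReal.add_lt_add_left one_ne_top hρ
          _ = 1 * 2 := by norm_num
      have hρσ : ρ < σ := by
        rw [hσdef, ENNReal.lt_div_iff_mul_lt (Or.inl (by norm_num)) (Or.inl (by norm_num))]
        calc ρ * 2 = ρ + ρ := by ring
          _ < 1 + ρ := by exact ENNReal.add_lt_add_right hρtop hρ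
      set θ : ℝ≥0∞ := σ ^ (α - 1)⁻¹ with hθdef
      have hα1 : (α : ℝ) - 1 ≠ 0 := by linarith
      have hθσ : θ ^ (α - 1) = σ := by
        rw [hθdef, ← ENNReal.rpow_mul, inv_mul_cancel₀ hα1, ENNReal.rpow_one]
      have hθ0 : θ ≠ 0 :=
        (ENNReal.rpow_pos (zero_lt_iff.mpr hσ0) hσtop).ne'
      have hθ1 : θ < 1 := ENNReal.rpow_lt_one hσ1 (inv_pos.mpr (by linarith))
      refine ⟨(1 - θ)⁻¹ ^ (α - 1), σ⁻¹, ?_, ?_, ?_, fun a i => ?_⟩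
      · refine ENNReal.rpow_ne_top_of_nonneg (by linarith) (ENNReal.inv_ne_top.mpr ?_)
        exact (tsub_pos_iff_lt.mpr hθ1).ne'
      · exact ENNReal.inv_ne_top.mpr hσ0
      · calc ρ * σ⁻¹ = ρ / σ := rfl
          _ < 1 := by
            rw [ENNReal.div_lt_iff (Or.inl hσ0) (Or.inl hσtop), one_mul]; exact hρσ
      · have := holder_aux' h1 hθ0 hθ1 a i
        rwa [hθσ] at this
  refine ⟨K * (1 - ρ * ψ)⁻¹, ?_, fun t a hdec => ?_⟩
  · refine ENNReal.mul_ne_top hK (ENNReal.inv_ne_top.mpr ?_)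
    exact (tsub_pos_iff_lt.mpr hr).ne'
  · have hpow : ∀ j m : ℕ, t (j + m) ≤ ρ ^ m * t j := by
      intro j m
      induction m with
      | zero => simp
      | succ m ih =>
          calc t (j + (m + 1)) = t ((j + m) + 1) := by rw [← add_assoc]
            _ ≤ ρ * t (j + m) := hdec _
            _ ≤ ρ * (ρ ^ m * t j) := mul_le_mul_right ih ρ
            _ = ρ ^ (m + 1) * t j := by rw [pow_succ]; ring
    set F : ℕ → ℕ → ℝ≥0∞ :=
      fun i j => if j ≤ i then ψ ^ (i - j) * (t i * a j ^ α) else 0 with hF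
    calc ∑' i, t i * (∑ j ∈ Finset.range (i+1), a j) ^ α
        ≤ ∑' i, K * ∑ j ∈ Finset.range (i+1), ψ ^ (i - j) * (t i * a j ^ α) := by
          refine ENNReal.tsum_le_tsum fun i => ?_
          calc t i * (∑ j ∈ Finset.range (i+1), a j) ^ α
              ≤ t i * (K * ∑ j ∈ Finset.range (i+1), ψ ^ (i - j) * a j ^ α) :=
                mul_le_mul_right (hH a i) _
            _ = K * ∑ j ∈ Finset.range (i+1), ψ ^ (i - j) * (t i * a j ^ α) := by
                rw [mul_left_comm, Finset.mul_sum]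
                exact congrArg (K * ·) (Finset.sum_congr rfl fun j _ => by ring)
      _ = K * ∑' i, ∑' j, F i j := by
          rw [← ENNReal.tsum_mul_left]
          refine tsum_congr fun i => ?_
          refine congrArg (K * ·) ?_
          rw [eq_comm]
          refine tsum_eq_sum (s := Finset.range (i+1)) ?_ |>.trans ?_
          · intro j hj
            simp only [hF]
            rw [if_neg]
            exact fun h => absurd (Finset.mem_range_succ_iff.mpr h) hj
          · refine Finset.sum_congr rfl fun j hj => ?_
            simp only [hF]
            rw [if_pos (Finset.mem_range_succ_iff.mp hj)]
      _ = K * ∑' j, ∑' i, F i j := by rw [ENNReal.tsum_comm]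
      _ ≤ K * ∑' j, ∑' i, (if j ≤ i then (ρ * ψ) ^ (i - j) else 0) * (t j * a j ^ α) := by
          refine mul_le_mul_right (ENNReal.tsum_le_tsum fun j => ENNReal.tsum_le_tsum fun i => ?_) _
          simp only [hF]
          by_cases h : j ≤ i
          · rw [if_pos h, if_pos h]
            have ht : t i ≤ ρ ^ (i - j) * t j := by
              have := hpow j (i - j)
              rwa [Nat.add_sub_cancel' h] at this
            calc ψ ^ (i - j) * (t i * a j ^ α)
                ≤ ψ ^ (i - j) * (ρ ^ (i - j) * t j * a j ^ α) := by
                  exact mul_le_mul_right (mul_le_mul_left ht _) _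
              _ = (ρ * ψ) ^ (i - j) * (t j * a j ^ α) := by rw [mul_pow]; ring
          · rw [if_neg h, if_neg h]
            exact zero_le ..
      _ = K * ∑' j, (1 - ρ * ψ)⁻¹ * (t j * a j ^ α) := by
          refine congrArg (K * ·) (tsum_congr fun j => ?_)
          rw [ENNReal.tsum_mul_right]
          refine congrArg (· * (t j * a j ^ α)) ?_
          have hinj : Function.Injective (fun m : ℕ => m + j) := add_left_injective j
          have hsupp : Function.support (fun i => if j ≤ i then (ρ * ψ) ^ (i - j) else 0)
              ⊆ Set.range (fun m : ℕ => m + j) := by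
            intro i hi
            by_cases h : j ≤ i
            · exact ⟨i - j, by simp [Nat.sub_add_cancel h]⟩
            · simp [if_neg h] at hi
          have := Function.Injective.tsum_eq hinj
            (f := fun i => if j ≤ i then (ρ * ψ) ^ (i - j) else 0) hsupp
          rw [← this]
          have : ∀ m : ℕ, (if j ≤ m + j then (ρ * ψ) ^ (m + j - j) else 0) = (ρ * ψ) ^ m := by
            intro m; rw [if_pos (Nat.le_add_left j m), Nat.add_sub_cancel]
          simp only [this]
          exact ENNReal.tsum_geometric (ρ * ψ)
      _ = K * (1 - ρ * ψ)⁻¹ * ∑' j, t j * a j ^ α := by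
          rw [ENNReal.tsum_mul_left, ← mul_assoc]


private def eShift (n : ℤ) : ℕ ≃ {k : ℤ // n + 1 ≤ k} where
  toFun i := ⟨n + 1 + i, by omega⟩
  invFun k := (k.1 - (n + 1)).toNat
  left_inv i := by
    show ((n + 1 + (i : ℤ) - (n + 1)).toNat) = i
    omega
  right_inv k := Subtype.ext (by have := k.2; simp; omega)

theorem statement9 (α : ℝ) (hα : 0 < α) (ρ : ℝ≥0∞) (hρ : ρ < 1) :
    ∃ c₁ c₂ : ℝ≥0∞, 0 < c₁ ∧ c₂ < ∞ ∧
      ∀ (a b : EReal), a < b →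
      ∀ (n : ℤ) (x : ℤ → ℝ) (τ : ℤ → ℝ≥0∞),
        (∀ k, n ≤ k → x k ∈ Iab a b) →
        (∀ k, n ≤ k → x k < x (k + 1)) →
        (∀ k, n + 1 ≤ k → 0 < τ k ∧ τ k < ∞) →
        (∀ k, n + 1 ≤ k → τ (k + 1) ≤ ρ * τ k) →
        ∀ g : ℝ → ℝ≥0∞, Measurable g →
          c₁ * (∑' k : {k : ℤ // n + 1 ≤ k},
                τ k.1 * (∫⁻ s in Ioo (x (k.1 - 1)) (x k.1), g s) ^ α) ≤
              (∑' k : {k : ℤ // n + 1 ≤ k},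
                τ k.1 * (∫⁻ s in Ioo (x n) (x k.1), g s) ^ α) ∧
            (∑' k : {k : ℤ // n + 1 ≤ k},
                τ k.1 * (∫⁻ s in Ioo (x n) (x k.1), g s) ^ α) ≤
              c₂ * ∑' k : {k : ℤ // n + 1 ≤ k},
                τ k.1 * (∫⁻ s in Ioo (x (k.1 - 1)) (x k.1), g s) ^ α := by
  obtain ⟨C, hC, hkey⟩ := key_aux' hα hρ
  refine ⟨1, C + 1, one_pos, by simp [lt_top_iff_ne_top, hC], ?_⟩
  intro a b hab n x τ hmem hmono hτ hτdec g hg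
  have hxle : ∀ k m : ℤ, n ≤ k → k ≤ m → x k ≤ x m := by
    intro k m hk hkm
    exact Int.le_induction (motive := fun m _ => x k ≤ x m) le_rfl
      (fun m hm ih => ih.trans (hmono m (hk.trans hm)).le) m hkm
  constructor
  · rw [one_mul]
    refine ENNReal.tsum_le_tsum fun k => ?_
    refine mul_le_mul_right (ENNReal.rpow_le_rpow ?_ hα.le) _
    refine lintegral_mono_set (Ioo_subset_Ioo ?_ le_rfl)
    exact hxle n (k.1 - 1) le_rfl (by have := k.2; omega)
  · set t : ℕ → ℝ≥0∞ := fun i => τ (n + 1 + i) with ht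
    set A : ℕ → ℝ≥0∞ := fun i => ∫⁻ s in Ioo (x (n + i)) (x (n + i + 1)), g s with hA
    have hdec : ∀ i, t (i + 1) ≤ ρ * t i := by
      intro i
      calc t (i + 1) = τ ((n + 1 + i) + 1) := by
            simp only [ht]; congr 1; push_cast; ring
        _ ≤ ρ * τ (n + 1 + i) := hτdec _ (by omega)
        _ = ρ * t i := rfl
    have hB : ∀ i : ℕ, (∫⁻ s in Ioo (x n) (x (n + 1 + i)), g s)
        = ∑ j ∈ Finset.range (i + 1), A j := by
      intro i
      induction i with
      | zero =>
        rw [Finset.sum_range_one]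
        simp only [hA, Nat.cast_zero, add_zero]
      | succ i ih =>
        have hc1 : (n + 1 + ((i + 1 : ℕ) : ℤ)) = (n + 1 + (i : ℤ)) + 1 := by push_cast; ring
        have hK : x n ≤ x (n + 1 + (i : ℤ)) := hxle n _ le_rfl (by omega)
        have hK2 : x (n + 1 + (i : ℤ)) < x ((n + 1 + (i : ℤ)) + 1) := hmono _ (by omega)
        have hdisj : Disjoint (Ioc (x n) (x (n + 1 + (i : ℤ))))
            (Ioo (x (n + 1 + (i : ℤ))) (x ((n + 1 + (i : ℤ)) + 1))) := by
          refine Set.disjoint_left.mpr fun y h1 h2 => absurd h2.1 (not_lt.mpr h1.2)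
        calc ∫⁻ s in Ioo (x n) (x (n + 1 + ((i + 1 : ℕ) : ℤ))), g s
            = ∫⁻ s in Ioo (x n) (x ((n + 1 + (i : ℤ)) + 1)), g s := by rw [hc1]
          _ = (∫⁻ s in Ioo (x n) (x (n + 1 + (i : ℤ))), g s)
              + ∫⁻ s in Ioo (x (n + 1 + (i : ℤ))) (x ((n + 1 + (i : ℤ)) + 1)), g s := by
              rw [← Set.Ioc_union_Ioo_eq_Ioo hK hK2,
                lintegral_union measurableSet_Ioo hdisj]
              congr 1
              exact (setLIntegral_congr Ioo_ae_eq_Ioc).symm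
          _ = (∑ j ∈ Finset.range (i + 1), A j) + A (i + 1) := by
              rw [ih]
              congr 1
              simp only [hA]
              rw [show n + 1 + (i : ℤ) = n + ((i + 1 : ℕ) : ℤ) by push_cast; ring]
          _ = ∑ j ∈ Finset.range (i + 1 + 1), A j := (Finset.sum_range_succ A (i + 1)).symm
    have hL : (∑' k : {k : ℤ // n + 1 ≤ k}, τ k.1 * (∫⁻ s in Ioo (x n) (x k.1), g s) ^ α)
        = ∑' i : ℕ, t i * (∑ j ∈ Finset.range (i + 1), A j) ^ α := by
      rw [← Equiv.tsum_eq (eShift n)]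
      refine tsum_congr fun i => ?_
      simp only [eShift, Equiv.coe_fn_mk]
      rw [hB i]
    have hR : (∑' k : {k : ℤ // n + 1 ≤ k},
          τ k.1 * (∫⁻ s in Ioo (x (k.1 - 1)) (x k.1), g s) ^ α)
        = ∑' i : ℕ, t i * A i ^ α := by
      rw [← Equiv.tsum_eq (eShift n)]
      refine tsum_congr fun i => ?_
      simp only [eShift, Equiv.coe_fn_mk, ht, hA]
      rw [show (n + 1 + (i : ℤ)) - 1 = n + (i : ℤ) by ring,
        show (n + 1 + (i : ℤ)) = n + (i : ℤ) + 1 by ring]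
    rw [hL, hR]
    calc ∑' i : ℕ, t i * (∑ j ∈ Finset.range (i + 1), A j) ^ α
        ≤ C * ∑' i : ℕ, t i * A i ^ α := hkey t A hdec
      _ ≤ (C + 1) * ∑' i : ℕ, t i * A i ^ α := by
          exact mul_le_mul_left (le_add_right le_rfl) _
end
end

section
/- Let -∞ ≤ a < b ≤ ∞, let n ∈ ℤ, let {x_k}_{k=n}^∞ ⊂ (a,b) be a strictly increasing sequence, and let {τ_k}_{k=n+1}^∞ be a geometrically decreasing sequence of positive numbers, i.e. sup_{k≥n+1} τ_{k+1}/τ_k < 1. Then there exist positive constants c₁, c₂ (depending only on the geometric decay ratio) such that for every nonnegative measurable function g on (a,b): c₁ · Σ_{k=n+1}^∞ τ_k · ess sup_{s∈(x_{k-1},x_k)} g(s) ≤ Σ_{k=n+1}^∞ τ_k · ess sup_{s∈(x_n,x_k)} g(s) ≤ c₂ · Σ_{k=n+1}^∞ τ_k · ess sup_{s∈(x_{k-1},x_k)} g(s). -/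
open MeasureTheory ENNReal Set

noncomputable section

theorem statement10 (ρ : ℝ≥0∞) (hρ : ρ < 1) :
    ∃ c₁ c₂ : ℝ≥0∞, 0 < c₁ ∧ c₂ < ∞ ∧
      ∀ (a b : EReal), a < b →
      ∀ (n : ℤ) (x : ℤ → ℝ) (τ : ℤ → ℝ≥0∞),
        (∀ k, n ≤ k → x k ∈ Iab a b) →
        (∀ k, n ≤ k → x k < x (k + 1)) →
        (∀ k, n + 1 ≤ k → 0 < τ k ∧ τ k < ∞) →
        (∀ k, n + 1 ≤ k → τ (k + 1) ≤ ρ * τ k) →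
        ∀ g : ℝ → ℝ≥0∞, Measurable g →
          c₁ * (∑' k : {k : ℤ // n + 1 ≤ k},
                τ k.1 * essSup g (volume.restrict (Ioo (x (k.1 - 1)) (x k.1)))) ≤
              (∑' k : {k : ℤ // n + 1 ≤ k},
                τ k.1 * essSup g (volume.restrict (Ioo (x n) (x k.1)))) ∧
            (∑' k : {k : ℤ // n + 1 ≤ k},
                τ k.1 * essSup g (volume.restrict (Ioo (x n) (x k.1)))) ≤
              c₂ * ∑' k : {k : ℤ // n + 1 ≤ k},
                τ k.1 * essSup g (volume.restrict (Ioo (x (k.1 - 1)) (x k.1))) := by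
  refine ⟨1, (1 - ρ)⁻¹, zero_lt_one, ENNReal.inv_lt_top.2 (tsub_pos_of_lt hρ), ?_⟩
  intro a b hab n x τ hxab hmono hτ hρτ g hg
  -- monotone
  have hxmono : ∀ m k : ℤ, n ≤ m → m ≤ k → x m ≤ x k := by
    intro m k hm hk
    exact Int.le_induction (motive := fun k _ => x m ≤ x k) (le_refl _)
      (fun k hk ih => ih.trans (hmono k (hm.trans hk)).le) k hk
  set e : ℤ → ℝ≥0∞ := fun k => essSup g (volume.restrict (Ioo (x (k - 1)) (x k))) with he
  set S : ℤ → ℝ≥0∞ := fun k => essSup g (volume.restrict (Ioo (x n) (x k))) with hS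
  constructor
  · rw [one_mul]
    refine ENNReal.tsum_le_tsum fun k => ?_
    refine mul_le_mul_right ?_ _
    refine essSup_mono_measure (Measure.absolutelyContinuous_of_le ?_)
    refine Measure.restrict_mono (Ioo_subset_Ioo (hxmono n (k.1 - 1) le_rfl (by omega)) le_rfl) le_rfl
  -- upper bound
  have hSsum : ∀ k : ℤ, n + 1 ≤ k → S k ≤ ∑ j ∈ Finset.Icc (n + 1) k, e j := by
    refine Int.le_induction (motive := fun k _ => S k ≤ ∑ j ∈ Finset.Icc (n + 1) k, e j) ?_ ?_
    · show S (n + 1) ≤ ∑ j ∈ Finset.Icc (n + 1) (n + 1), e j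
      rw [Finset.Icc_self, Finset.sum_singleton]
      have : (n + 1 : ℤ) - 1 = n := by ring
      simp only [hS, he, this]
      exact le_rfl
    · intro k hk ih
      have hsup : S (k + 1) ≤ S k ⊔ e (k + 1) := by
        refine essSup_le_of_ae_le _ ?_
        have h1 : ∀ᵐ s ∂(volume : Measure ℝ), s ∈ Ioo (x n) (x k) → g s ≤ S k :=
          (ae_restrict_iff' measurableSet_Ioo).mp (ae_le_essSup g)
        have h2 : ∀ᵐ s ∂(volume : Measure ℝ), s ∈ Ioo (x ((k+1) - 1)) (x (k+1)) → g s ≤ e (k + 1) :=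
          (ae_restrict_iff' measurableSet_Ioo).mp (ae_le_essSup g)
        have h3 : ∀ᵐ s : ℝ ∂(volume : Measure ℝ), s ≠ x k := by
          rw [ae_iff]
          simp [not_not, measure_singleton]
        have hk1 : (k + 1 : ℤ) - 1 = k := by ring
        rw [hk1] at h2
        refine (ae_restrict_of_ae ((h1.and h2).and h3)).mp
          ((ae_restrict_mem measurableSet_Ioo).mono ?_)
        rintro s hs ⟨⟨h1s, h2s⟩, h3s⟩
        rcases lt_or_gt_of_ne h3s with hlt | hgt
        · exact le_sup_of_le_left (h1s ⟨hs.1, hlt⟩)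
        · exact le_sup_of_le_right (h2s ⟨hgt, hs.2⟩)
      refine hsup.trans ?_
      have hins : Finset.Icc (n + 1) (k + 1) = insert (k + 1) (Finset.Icc (n + 1) k) := by
        ext j; simp only [Finset.mem_Icc, Finset.mem_insert]; omega
      rw [hins, Finset.sum_insert (by simp only [Finset.mem_Icc]; omega)]
      exact sup_le (le_add_left ih) le_self_add
  have hgeo : ∀ j : ℤ, n + 1 ≤ j → ∀ i : ℕ, τ (j + i) ≤ ρ ^ i * τ j := by
    intro j hj i
    induction i with
    | zero => simp
    | succ i ih =>
      have : (j + (i + 1 : ℕ) : ℤ) = (j + i) + 1 := by push_cast; ring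
      rw [this]
      calc τ ((j + i) + 1) ≤ ρ * τ (j + i) := hρτ _ (by omega)
        _ ≤ ρ * (ρ ^ i * τ j) := mul_le_mul_right ih _
        _ = ρ ^ (i + 1) * τ j := by ring
  -- double sum manipulation
  set F : ℤ → ℤ → ℝ≥0∞ := fun k j => if n + 1 ≤ j ∧ j ≤ k then τ k * e j else 0 with hF
  calc (∑' k : {k : ℤ // n + 1 ≤ k}, τ k.1 * S k.1)
      ≤ ∑' k : {k : ℤ // n + 1 ≤ k}, ∑' j : ℤ, F k.1 j := by
        refine ENNReal.tsum_le_tsum fun k => ?_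
        have : ∑' j : ℤ, F k.1 j = ∑ j ∈ Finset.Icc (n + 1) k.1, F k.1 j := by
          refine tsum_eq_sum fun j hj => ?_
          simp only [hF]
          rw [if_neg]
          simpa [Finset.mem_Icc] using hj
        rw [this]
        have : ∑ j ∈ Finset.Icc (n + 1) k.1, F k.1 j
            = ∑ j ∈ Finset.Icc (n + 1) k.1, τ k.1 * e j := by
          refine Finset.sum_congr rfl fun j hj => ?_
          simp only [hF]
          rw [if_pos]
          simpa [Finset.mem_Icc] using hj
        rw [this, ← Finset.mul_sum]
        exact mul_le_mul_right (hSsum k.1 k.2) _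
    _ = ∑' k : ℤ, ∑' j : ℤ, F k j := by
        refine (tsum_subtype {k : ℤ | n + 1 ≤ k} (fun k => ∑' j : ℤ, F k j)).trans
          (tsum_congr fun k => ?_)
        rw [Set.indicator_apply]
        by_cases hk : n + 1 ≤ k
        · rw [if_pos (show k ∈ {k : ℤ | n + 1 ≤ k} from hk)]
        · rw [if_neg (show k ∉ {k : ℤ | n + 1 ≤ k} from hk)]
          refine ((ENNReal.summable.tsum_eq_zero_iff).mpr fun j => ?_).symm
          simp only [hF]
          rw [if_neg]
          omega
    _ = ∑' j : ℤ, ∑' k : ℤ, F k j := ENNReal.tsum_comm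
    _ ≤ ∑' j : ℤ, (if n + 1 ≤ j then (1 - ρ)⁻¹ * (τ j * e j) else 0) := by
        refine ENNReal.tsum_le_tsum fun j => ?_
        by_cases hj : n + 1 ≤ j
        · rw [if_pos hj]
          have hinj : Function.Injective (fun i : ℕ => j + (i : ℤ)) := by
            intro i1 i2 h; simpa using h
          have hsupp : Function.support (fun k => F k j) ⊆ Set.range (fun i : ℕ => j + (i : ℤ)) := by
            intro k hk
            simp only [hF, Function.mem_support, ne_eq, ite_eq_right_iff, not_forall] at hk
            obtain ⟨⟨-, hjk⟩, -⟩ := hk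
            exact ⟨(k - j).toNat, by show j + ((k - j).toNat : ℤ) = k; omega⟩
          rw [← hinj.tsum_eq hsupp]
          have : ∀ i : ℕ, F (j + i) j = τ (j + i) * e j := by
            intro i
            simp only [hF]
            rw [if_pos ⟨hj, by omega⟩]
          calc ∑' i : ℕ, F (j + (i : ℤ)) j ≤ ∑' i : ℕ, ρ ^ i * τ j * e j := by
                refine ENNReal.tsum_le_tsum fun i => ?_
                rw [this i]
                exact mul_le_mul_left (hgeo j hj i) _
            _ = (∑' i : ℕ, ρ ^ i) * (τ j * e j) := by
                rw [ENNReal.tsum_mul_right, ENNReal.tsum_mul_right, mul_assoc]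
            _ = (1 - ρ)⁻¹ * (τ j * e j) := by rw [ENNReal.tsum_geometric]
        · rw [if_neg hj]
          refine le_of_eq ((ENNReal.summable.tsum_eq_zero_iff).mpr fun k => ?_)
          simp only [hF]
          rw [if_neg]
          omega
    _ = (1 - ρ)⁻¹ * ∑' k : {k : ℤ // n + 1 ≤ k}, τ k.1 * e k.1 := by
        have h1 : ∀ j : ℤ, (if n + 1 ≤ j then (1 - ρ)⁻¹ * (τ j * e j) else 0)
            = (1 - ρ)⁻¹ * (if n + 1 ≤ j then τ j * e j else 0) := by
          intro j; split <;> simp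
        rw [tsum_congr h1, ENNReal.tsum_mul_left]
        congr 1
        have h2 := tsum_subtype {k : ℤ | n + 1 ≤ k} (fun j => τ j * e j)
        simp only [Set.indicator_apply, Set.mem_setOf_eq] at h2
        exact h2.symm
end
end

section
/- Let -∞ ≤ a < b ≤ ∞, let α > 0, let n ∈ ℤ, let {x_k}_{k=n}^∞ ⊂ (a,b) be a strictly increasing sequence, let {τ_k}_{k=n+1}^∞ be a geometrically decreasing sequence of positive numbers (i.e. sup_{k≥n+1} τ_{k+1}/τ_k < 1), and let {σ_k}_{k=n}^∞ be a positive nondecreasing sequence. Then there exist positive constants c₁, c₂ (depending only on α and the geometric decay ratio) such that for every nonnegative measurable function g on (a,b): c₁ · sup_{k≥n+1} τ_k (∫_{x_{k-1}}^{x_k} g)^α σ_{k-1} ≤ sup_{k≥n+1} τ_k · sup_{n≤i<k} (∫_{x_i}^{x_k} g)^α σ_i ≤ c₂ · sup_{k≥n+1} τ_k (∫_{x_{k-1}}^{x_k} g)^α σ_{k-1}. -/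
open MeasureTheory ENNReal Set

noncomputable section

theorem statement11 (α : ℝ) (hα : 0 < α) (ρ : ℝ≥0∞) (hρ : ρ < 1) :
    ∃ c₁ c₂ : ℝ≥0∞, 0 < c₁ ∧ c₂ < ∞ ∧
      ∀ (a b : EReal), a < b →
      ∀ (n : ℤ) (x : ℤ → ℝ) (τ σ : ℤ → ℝ≥0∞),
        (∀ k, n ≤ k → x k ∈ Iab a b) →
        (∀ k, n ≤ k → x k < x (k + 1)) →
        (∀ k, n + 1 ≤ k → 0 < τ k ∧ τ k < ∞) →
        (∀ k, n + 1 ≤ k → τ (k + 1) ≤ ρ * τ k) →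
        (∀ k, n ≤ k → 0 < σ k ∧ σ k < ∞) →
        (∀ k, n ≤ k → σ k ≤ σ (k + 1)) →
        ∀ g : ℝ → ℝ≥0∞, Measurable g →
          c₁ * (⨆ (k : ℤ) (_ : n + 1 ≤ k),
                τ k * ((∫⁻ s in Ioo (x (k - 1)) (x k), g s) ^ α * σ (k - 1))) ≤
              (⨆ (k : ℤ) (_ : n + 1 ≤ k),
                τ k * ⨆ (i : ℤ) (_ : n ≤ i ∧ i < k),
                  (∫⁻ s in Ioo (x i) (x k), g s) ^ α * σ i) ∧
            (⨆ (k : ℤ) (_ : n + 1 ≤ k),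
                τ k * ⨆ (i : ℤ) (_ : n ≤ i ∧ i < k),
                  (∫⁻ s in Ioo (x i) (x k), g s) ^ α * σ i) ≤
              c₂ * ⨆ (k : ℤ) (_ : n + 1 ≤ k),
                τ k * ((∫⁻ s in Ioo (x (k - 1)) (x k), g s) ^ α * σ (k - 1)) := by
  have hα' : (0:ℝ) ≤ 1 / α := by positivity
  set r : ℝ≥0∞ := ρ ^ (1 / α) with hrdef
  have hr1 : r < 1 := ENNReal.rpow_lt_one hρ (by positivity)
  have hsub0 : (1 : ℝ≥0∞) - r ≠ 0 := by
    simp only [ne_eq, tsub_eq_zero_iff_le, not_le]; exact hr1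
  have hsubtop : (1 : ℝ≥0∞) - r ≠ ∞ := by
    exact ne_top_of_le_ne_top one_ne_top tsub_le_self
  set C : ℝ≥0∞ := (1 - r)⁻¹ with hCdef
  have hCne0 : C ≠ 0 := ENNReal.inv_ne_zero.mpr hsubtop
  have hCnetop : C ≠ ∞ := ENNReal.inv_ne_top.mpr hsub0
  refine ⟨1, C ^ α, one_pos, ENNReal.rpow_lt_top_of_nonneg hα.le hCnetop, ?_⟩
  have hc2ne0 : C ^ α ≠ 0 := (ENNReal.rpow_pos (pos_iff_ne_zero.mpr hCne0) hCnetop).ne'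
  intro a b hab n x τ σ hxab hxmono hτ hτρ hσ hσmono g hg
  set I : ℤ → ℝ≥0∞ := fun j => ∫⁻ s in Ioo (x (j - 1)) (x j), g s with hIdef
  set A : ℝ≥0∞ := ⨆ (k : ℤ) (_ : n + 1 ≤ k), τ k * (I k ^ α * σ (k - 1)) with hAdef
  -- basic monotonicity facts
  have hxle : ∀ i m : ℤ, n ≤ i → i ≤ m → x i ≤ x m := by
    intro i m hni him
    exact Int.le_induction (motive := fun m _ => x i ≤ x m) le_rfl (fun m hm ih => ih.trans (hxmono m (by omega)).le) m him
  have hσle : ∀ i m : ℤ, n ≤ i → i ≤ m → σ i ≤ σ m := by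
    intro i m hni him
    exact Int.le_induction (motive := fun m _ => σ i ≤ σ m) le_rfl (fun m hm ih => ih.trans (hσmono m (by omega))) m him
  have hτle : ∀ j k : ℤ, n + 1 ≤ j → j ≤ k → τ k ≤ ρ ^ (k - j).toNat * τ j := by
    intro j k hnj hjk
    refine Int.le_induction (motive := fun k _ => τ k ≤ ρ ^ (k - j).toNat * τ j) (by simp) (fun k hk ih => ?_) k hjk
    have h1 : τ (k + 1) ≤ ρ * τ k := hτρ k (by omega)
    have h2 : (k + 1 - j).toNat = (k - j).toNat + 1 := by omega
    calc τ (k + 1) ≤ ρ * τ k := h1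
      _ ≤ ρ * (ρ ^ (k - j).toNat * τ j) := mul_le_mul' le_rfl ih
      _ = ρ ^ (k + 1 - j).toNat * τ j := by rw [h2, pow_succ]; ring
  constructor
  · -- lower bound with c₁ = 1
    rw [one_mul]
    refine iSup_mono fun k => iSup_mono fun hk => ?_
    refine mul_le_mul' le_rfl ?_
    exact le_iSup₂_of_le (k - 1) ⟨by omega, by omega⟩ le_rfl
  · -- upper bound
    rcases eq_or_ne A ∞ with hA | hA
    · rw [hA, ENNReal.mul_top hc2ne0]; exact le_top
    -- key per-piece bound
    have hIj : ∀ i j k : ℤ, n ≤ i → i < j → j ≤ k →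
        I j ≤ r ^ (k - j).toNat * (A / (τ k * σ i)) ^ (1 / α) := by
      intro i j k hni hij hjk
      have hnj : n + 1 ≤ j := by omega
      have hnk : n + 1 ≤ k := by omega
      have ht0 : τ k * σ i ≠ 0 := by
        exact mul_ne_zero (hτ k hnk).1.ne' (hσ i hni).1.ne'
      have htt : τ k * σ i ≠ ∞ := by
        exact ENNReal.mul_ne_top (hτ k hnk).2.ne (hσ i hni).2.ne
      have h1 : τ j * (I j ^ α * σ (j - 1)) ≤ A :=
        le_iSup₂_of_le j hnj le_rfl
      set m : ℕ := (k - j).toNat with hm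
      have h2 : I j ^ α * (τ k * σ i) ≤ ρ ^ m * A := by
        calc I j ^ α * (τ k * σ i)
            ≤ I j ^ α * (ρ ^ m * τ j * σ (j - 1)) := by
              refine mul_le_mul' le_rfl (mul_le_mul' (hτle j k hnj hjk) ?_)
              exact hσle i (j - 1) hni (by omega)
          _ = ρ ^ m * (τ j * (I j ^ α * σ (j - 1))) := by ring
          _ ≤ ρ ^ m * A := mul_le_mul' le_rfl h1
      have h3 : I j ^ α ≤ ρ ^ m * A / (τ k * σ i) :=
        (ENNReal.le_div_iff_mul_le (Or.inl ht0) (Or.inl htt)).mpr h2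
      have h4 := ENNReal.rpow_le_rpow h3 hα'
      have hL : (I j ^ α) ^ (1 / α) = I j := by
        rw [← ENNReal.rpow_mul, mul_one_div, div_self hα.ne', ENNReal.rpow_one]
      have hR : (ρ ^ m * A / (τ k * σ i)) ^ (1 / α)
          = r ^ m * (A / (τ k * σ i)) ^ (1 / α) := by
        rw [mul_div_assoc, ENNReal.mul_rpow_of_nonneg _ _ hα']
        congr 1
        rw [← ENNReal.rpow_natCast ρ m, ← ENNReal.rpow_mul,
          mul_comm ((m : ℕ) : ℝ) (1 / α), ENNReal.rpow_mul, ENNReal.rpow_natCast]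
      rw [hL, hR] at h4
      exact h4
    -- geometric sum bound
    have hS : ∀ N : ℕ, ∑ p ∈ Finset.range N, r ^ p ≤ C :=
      fun N => (ENNReal.sum_le_tsum _).trans_eq (ENNReal.tsum_geometric r)
    -- sum over pieces by downward induction
    have hsum : ∀ k : ℤ, n + 1 ≤ k → ∀ i : ℤ, i ≤ k - 1 → n ≤ i →
        (∫⁻ s in Ioc (x i) (x k), g s) ≤
          (A / (τ k * σ i)) ^ (1 / α) * ∑ p ∈ Finset.range (k - i).toNat, r ^ p := by
      intro k hnk
      refine Int.le_induction_down ?_ ?_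
      · -- base i = k - 1
        intro _
        have hIoc : (∫⁻ s in Ioc (x (k - 1)) (x k), g s) = I (k - 1 + 1) := by
          simp only [hIdef, sub_add_cancel]
          exact (setLIntegral_congr (Ioo_ae_eq_Ioc (a := x (k-1)) (b := x k))).symm
        rw [hIoc]
        have := hIj (k - 1) (k - 1 + 1) k (by omega) (by omega) (by omega)
        simpa using this.trans_eq (by simp)
      · -- step i → i - 1
        intro i hik ih hni'
        have hni : n ≤ i := by omega
        have h1 : (∫⁻ s in Ioc (x (i - 1)) (x k), g s) ≤
            (∫⁻ s in Ioc (x (i - 1)) (x i), g s) + ∫⁻ s in Ioc (x i) (x k), g s := by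
          rw [← Ioc_union_Ioc_eq_Ioc (hxle (i - 1) i (by omega) (by omega))
            (hxle i k hni (by omega))]
          exact lintegral_union_le _ _ _
        have hIi : (∫⁻ s in Ioc (x (i - 1)) (x i), g s) = I i := by
          simp only [hIdef]
          exact (setLIntegral_congr (Ioo_ae_eq_Ioc (a := x (i-1)) (b := x i))).symm
        have h2 : I i ≤ r ^ (k - i).toNat * (A / (τ k * σ (i - 1))) ^ (1 / α) :=
          hIj (i - 1) i k (by omega) (by omega) (by omega)
        have hD : (A / (τ k * σ i)) ^ (1 / α) ≤ (A / (τ k * σ (i - 1))) ^ (1 / α) := by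
          refine ENNReal.rpow_le_rpow ?_ hα'
          exact ENNReal.div_le_div_left
            (mul_le_mul' le_rfl (hσle (i - 1) i (by omega) (by omega))) A
        have h3 : (∫⁻ s in Ioc (x i) (x k), g s) ≤
            (A / (τ k * σ (i - 1))) ^ (1 / α) * ∑ p ∈ Finset.range (k - i).toNat, r ^ p :=
          (ih hni).trans (mul_le_mul' hD le_rfl)
        have hNat : (k - (i - 1)).toNat = (k - i).toNat + 1 := by omega
        calc (∫⁻ s in Ioc (x (i - 1)) (x k), g s)
            ≤ (∫⁻ s in Ioc (x (i - 1)) (x i), g s) + ∫⁻ s in Ioc (x i) (x k), g s := h1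
          _ ≤ r ^ (k - i).toNat * (A / (τ k * σ (i - 1))) ^ (1 / α) +
              (A / (τ k * σ (i - 1))) ^ (1 / α) * ∑ p ∈ Finset.range (k - i).toNat, r ^ p :=
            add_le_add (hIi.le.trans h2) h3
          _ = (A / (τ k * σ (i - 1))) ^ (1 / α) *
              ∑ p ∈ Finset.range (k - (i - 1)).toNat, r ^ p := by
            rw [hNat, Finset.sum_range_succ]; ring
    -- conclude
    refine iSup_le fun k => iSup_le fun hk => ?_
    have hτk0 : τ k ≠ 0 := (hτ k hk).1.ne'
    have hτkt : τ k ≠ ∞ := (hτ k hk).2.ne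
    have hkey : (⨆ (i : ℤ) (_ : n ≤ i ∧ i < k),
        (∫⁻ s in Ioo (x i) (x k), g s) ^ α * σ i) ≤ C ^ α * A / τ k := by
      refine iSup_le fun i => iSup_le fun hi => ?_
      obtain ⟨hni, hik⟩ := hi
      have ht0 : τ k * σ i ≠ 0 := mul_ne_zero hτk0 (hσ i hni).1.ne'
      have htt : τ k * σ i ≠ ∞ := ENNReal.mul_ne_top hτkt (hσ i hni).2.ne
      rw [ENNReal.le_div_iff_mul_le (Or.inl hτk0) (Or.inl hτkt)]
      have hIle : (∫⁻ s in Ioo (x i) (x k), g s) ≤ (A / (τ k * σ i)) ^ (1 / α) * C := by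
        calc (∫⁻ s in Ioo (x i) (x k), g s)
            ≤ ∫⁻ s in Ioc (x i) (x k), g s :=
              lintegral_mono_set Ioo_subset_Ioc_self
          _ ≤ (A / (τ k * σ i)) ^ (1 / α) * ∑ p ∈ Finset.range (k - i).toNat, r ^ p :=
              hsum k hk i (by omega) hni
          _ ≤ (A / (τ k * σ i)) ^ (1 / α) * C := mul_le_mul' le_rfl (hS _)
      have hpow : ((A / (τ k * σ i)) ^ (1 / α) * C) ^ α
          = A / (τ k * σ i) * C ^ α := by
        rw [ENNReal.mul_rpow_of_nonneg _ _ hα.le, ← ENNReal.rpow_mul,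
          one_div, inv_mul_cancel₀ hα.ne', ENNReal.rpow_one]
      calc (∫⁻ s in Ioo (x i) (x k), g s) ^ α * σ i * τ k
          ≤ (A / (τ k * σ i) * C ^ α) * σ i * τ k := by
            refine mul_le_mul' (mul_le_mul' ?_ le_rfl) le_rfl
            exact hpow ▸ ENNReal.rpow_le_rpow hIle hα.le
        _ = C ^ α * (A / (τ k * σ i) * (τ k * σ i)) := by
            rw [div_eq_mul_inv]; ring
        _ = C ^ α * A := by rw [ENNReal.div_mul_cancel ht0 htt]
    calc τ k * (⨆ (i : ℤ) (_ : n ≤ i ∧ i < k),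
          (∫⁻ s in Ioo (x i) (x k), g s) ^ α * σ i)
        ≤ τ k * (C ^ α * A / τ k) := mul_le_mul' le_rfl hkey
      _ = C ^ α * A := ENNReal.mul_div_cancel hτk0 hτkt
end
end

section
/- Let -∞ ≤ a < b ≤ ∞, let α > 0, let n ∈ ℤ, let {x_k}_{k=n}^∞ ⊂ (a,b) be a strictly increasing sequence, let {τ_k}_{k=n+1}^∞ be a geometrically decreasing sequence of positive numbers (i.e. sup_{k≥n+1} τ_{k+1}/τ_k < 1), and let {σ_k}_{k=n}^∞ be a positive nondecreasing sequence. Then there exist positive constants c₁, c₂ (depending only on α and the geometric decay ratio) such that for every nonnegative measurable function g on (a,b): c₁ · Σ_{k=n+1}^∞ τ_k (∫_{x_{k-1}}^{x_k} g)^α σ_{k-1} ≤ Σ_{k=n+1}^∞ τ_k · sup_{n≤i<k} (∫_{x_i}^{x_k} g)^α σ_i ≤ c₂ · Σ_{k=n+1}^∞ τ_k (∫_{x_{k-1}}^{x_k} g)^α σ_{k-1}. -/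
open MeasureTheory ENNReal Set

noncomputable section

lemma geom_finset_sum_le (θ : ℝ≥0∞) (i k : ℤ) :
    ∑ j ∈ Finset.Icc (i+1) k, θ ^ (((k:ℝ) - j)) ≤ (1 - θ)⁻¹ := by
  have h1 : ∀ j ∈ Finset.Icc (i+1) k, θ ^ (((k:ℝ) - j)) = θ ^ ((k - j).toNat) := by
    intro j hj
    simp only [Finset.mem_Icc] at hj
    rw [← ENNReal.rpow_natCast]
    congr 1
    have : ((k - j).toNat : ℤ) = k - j := Int.toNat_of_nonneg (by omega)
    rw [← Int.cast_natCast, this]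
    push_cast; ring
  rw [Finset.sum_congr rfl h1]
  have h2 : ∑ j ∈ Finset.Icc (i+1) k, θ ^ ((k - j).toNat)
      = ∑ m ∈ (Finset.Icc (i+1) k).image (fun j => (k - j).toNat), θ ^ m := by
    rw [Finset.sum_image]
    intro a ha b hb hab
    simp only [Finset.coe_Icc, Set.mem_Icc] at ha hb hab
    omega
  rw [h2]
  calc ∑ m ∈ (Finset.Icc (i+1) k).image (fun j => (k - j).toNat), θ ^ m
      ≤ ∑' m : ℕ, θ ^ m := ENNReal.sum_le_tsum _
    _ = (1 - θ)⁻¹ := ENNReal.tsum_geometric θ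

lemma geom_tail_le (q : ℝ≥0∞) (n j : ℤ) (hj : n + 1 ≤ j) :
    ∑' k : {k : ℤ // n + 1 ≤ k}, (if j ≤ k.1 then q ^ ((k.1:ℝ) - j) else 0) ≤ (1 - q)⁻¹ := by
  set f : {k : ℤ // n + 1 ≤ k} → ℝ≥0∞ := fun k => if j ≤ k.1 then q ^ ((k.1:ℝ) - j) else 0 with hf
  have heq : ∑' m : ℕ, f ⟨j + m, by omega⟩ = ∑' k, f k := by
    apply Function.Injective.tsum_eq (g := fun m : ℕ => (⟨j + m, by omega⟩ : {k : ℤ // n + 1 ≤ k}))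
    · intro a b hab
      simp only [Subtype.mk.injEq] at hab
      omega
    · intro k hk
      rcases k with ⟨k, hk'⟩
      simp only [Function.mem_support, hf] at hk
      have hjk : j ≤ k := by by_contra h; simp [h] at hk
      exact ⟨(k - j).toNat, by simp only [Subtype.mk.injEq]; omega⟩
  rw [← heq]
  have hfm : ∀ m : ℕ, f ⟨j + m, by omega⟩ = q ^ m := by
    intro m
    simp only [hf]
    rw [if_pos (by omega), ← ENNReal.rpow_natCast]
    congr 1
    push_cast; ring
  rw [tsum_congr hfm, ENNReal.tsum_geometric]

theorem statement12 (α : ℝ) (hα : 0 < α) (ρ : ℝ≥0∞) (hρ : ρ < 1) :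
    ∃ c₁ c₂ : ℝ≥0∞, 0 < c₁ ∧ c₂ < ∞ ∧
      ∀ (a b : EReal), a < b →
      ∀ (n : ℤ) (x : ℤ → ℝ) (τ σ : ℤ → ℝ≥0∞),
        (∀ k, n ≤ k → x k ∈ Iab a b) →
        (∀ k, n ≤ k → x k < x (k + 1)) →
        (∀ k, n + 1 ≤ k → 0 < τ k ∧ τ k < ∞) →
        (∀ k, n + 1 ≤ k → τ (k + 1) ≤ ρ * τ k) →
        (∀ k, n ≤ k → 0 < σ k ∧ σ k < ∞) →
        (∀ k, n ≤ k → σ k ≤ σ (k + 1)) →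
        ∀ g : ℝ → ℝ≥0∞, Measurable g →
          c₁ * (∑' k : {k : ℤ // n + 1 ≤ k},
                τ k.1 * ((∫⁻ s in Ioo (x (k.1 - 1)) (x k.1), g s) ^ α * σ (k.1 - 1))) ≤
              (∑' k : {k : ℤ // n + 1 ≤ k},
                τ k.1 * ⨆ (i : ℤ) (_ : n ≤ i ∧ i < k.1),
                  (∫⁻ s in Ioo (x i) (x k.1), g s) ^ α * σ i) ∧
            (∑' k : {k : ℤ // n + 1 ≤ k},
                τ k.1 * ⨆ (i : ℤ) (_ : n ≤ i ∧ i < k.1),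
                  (∫⁻ s in Ioo (x i) (x k.1), g s) ^ α * σ i) ≤
              c₂ * ∑' k : {k : ℤ // n + 1 ≤ k},
                τ k.1 * ((∫⁻ s in Ioo (x (k.1 - 1)) (x k.1), g s) ^ α * σ (k.1 - 1)) := by
  -- the geometric ratio, bounded away from 0
  set r : ℝ≥0∞ := ρ ⊔ 2⁻¹ with hrdef
  have hr1 : r < 1 := sup_lt_iff.mpr ⟨hρ, by norm_num⟩
  have hr0 : r ≠ 0 := by
    have h2 : (2⁻¹ : ℝ≥0∞) ≤ r := le_sup_right
    intro h; rw [h] at h2; simp at h2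
  have hrt : r ≠ ∞ := (hr1.trans ENNReal.one_lt_top).ne
  set q : ℝ≥0∞ := r ^ (2⁻¹ : ℝ) with hqdef
  have hq1 : q < 1 := ENNReal.rpow_lt_one hr1 (by norm_num)
  have hq0 : q ≠ 0 := by
    intro h
    rw [hqdef, ENNReal.rpow_eq_zero_iff] at h
    rcases h with ⟨h, _⟩ | ⟨h, h'⟩
    · exact hr0 h
    · exact hrt h
  have hqt : q ≠ ∞ := ENNReal.rpow_ne_top_of_nonneg (by norm_num) hrt
  set θ : ℝ≥0∞ := q ^ (α⁻¹ : ℝ) with hθdef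
  have hθ1 : θ < 1 := ENNReal.rpow_lt_one hq1 (by positivity)
  have hθ0 : θ ≠ 0 := by
    intro h
    rw [hθdef, ENNReal.rpow_eq_zero_iff] at h
    rcases h with ⟨h, _⟩ | ⟨h, h'⟩
    · exact hq0 h
    · exact hqt h
  have hθt : θ ≠ ∞ := ENNReal.rpow_ne_top_of_nonneg (by positivity) hqt
  have h1θ : (1 : ℝ≥0∞) - θ ≠ 0 := fun h => absurd (tsub_eq_zero_iff_le.mp h) hθ1.not_ge
  have h1q : (1 : ℝ≥0∞) - q ≠ 0 := fun h => absurd (tsub_eq_zero_iff_le.mp h) hq1.not_ge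
  set C1 : ℝ≥0∞ := ((1 - θ)⁻¹) ^ α with hC1def
  refine ⟨1, C1 * (1 - q)⁻¹, one_pos, ?_, ?_⟩
  · apply ENNReal.mul_lt_top
    · exact (ENNReal.rpow_lt_top_of_nonneg hα.le (ENNReal.inv_ne_top.mpr h1θ))
    · exact lt_top_iff_ne_top.mpr (ENNReal.inv_ne_top.mpr h1q)
  intro a b hab n x τ σ hxab hxlt hτ hτρ hσ hσmono g hg
  constructor
  · -- lower bound, c₁ = 1
    rw [one_mul]
    apply ENNReal.tsum_le_tsum
    intro k
    apply mul_le_mul_right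
    exact le_iSup₂_of_le (k.1 - 1) ⟨by have := k.2; omega, by omega⟩ le_rfl
  · -- upper bound
    -- monotonicity of x
    have hxmono : ∀ i k : ℤ, n ≤ i → i ≤ k → x i ≤ x k := by
      intro i k hi hik
      refine Int.le_induction (motive := fun k _ => x i ≤ x k) le_rfl ?_ k hik
      intro k hk ih
      exact ih.trans (hxlt k (by omega)).le
    -- monotonicity of σ
    have hσle : ∀ i m : ℤ, n ≤ i → i ≤ m → σ i ≤ σ m := by
      intro i m hi him
      refine Int.le_induction (motive := fun m _ => σ i ≤ σ m) le_rfl ?_ m him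
      intro m hm ih
      exact ih.trans (hσmono m (by omega))
    -- geometric decay of τ
    have hτr : ∀ j k : ℤ, n + 1 ≤ j → j ≤ k → τ k ≤ r ^ ((k:ℝ) - j) * τ j := by
      intro j k hj hjk
      refine Int.le_induction (motive := fun k _ => τ k ≤ r ^ ((k:ℝ) - j) * τ j) (by simp) ?_ k hjk
      intro k hk ih
      calc τ (k+1) ≤ ρ * τ k := hτρ k (by omega)
        _ ≤ r * (r ^ ((k:ℝ) - j) * τ j) := mul_le_mul' le_sup_left ih
        _ = r ^ (((k+1:ℤ):ℝ) - j) * τ j := by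
            rw [← mul_assoc,
              show ((k+1:ℤ):ℝ) - j = 1 + ((k:ℝ) - j) by push_cast; ring,
              ENNReal.rpow_add _ _ hr0 hrt, ENNReal.rpow_one]
    have hq2 : ∀ d : ℝ, r ^ d = q ^ d * q ^ d := by
      intro d
      rw [hqdef, ← ENNReal.rpow_mul, ← ENNReal.rpow_add _ _ hr0 hrt]
      congr 1
      ring
    have hqcancel : ∀ d : ℝ, q ^ d * q ^ (-d) = 1 := by
      intro d
      rw [← ENNReal.rpow_add _ _ hq0 hqt]
      simp
    have hkey : ∀ j k : ℤ, n + 1 ≤ j → j ≤ k →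
        τ k * θ ^ (-(((k:ℝ) - j) * α)) ≤ q ^ ((k:ℝ) - j) * τ j := by
      intro j k hj hjk
      have hθq : θ ^ (-(((k:ℝ) - j) * α)) = q ^ (-((k:ℝ) - j)) := by
        rw [hθdef, ← ENNReal.rpow_mul]
        congr 1
        field_simp
      rw [hθq]
      calc τ k * q ^ (-((k:ℝ) - j)) ≤ (r ^ ((k:ℝ) - j) * τ j) * q ^ (-((k:ℝ) - j)) :=
            mul_le_mul_left (hτr j k hj hjk) _
        _ = (q ^ ((k:ℝ) - j) * τ j) * (q ^ ((k:ℝ) - j) * q ^ (-((k:ℝ) - j))) := by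
            rw [hq2 ((k:ℝ) - j)]; ring
        _ = q ^ ((k:ℝ) - j) * τ j := by rw [hqcancel, mul_one]
    -- splitting integrals over Ioc
    have hIoc : ∀ i : ℤ, n ≤ i → ∀ k : ℤ, i ≤ k →
        (∫⁻ s in Ioc (x i) (x k), g s) ≤
          ∑ j ∈ Finset.Icc (i+1) k, ∫⁻ s in Ioc (x (j-1)) (x j), g s := by
      intro i hi k hik
      refine Int.le_induction (motive := fun k _ => (∫⁻ s in Ioc (x i) (x k), g s) ≤
          ∑ j ∈ Finset.Icc (i+1) k, ∫⁻ s in Ioc (x (j-1)) (x j), g s) ?_ ?_ k hik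
      · show (∫⁻ s in Ioc (x i) (x i), g s) ≤
            ∑ j ∈ Finset.Icc (i+1) i, ∫⁻ s in Ioc (x (j-1)) (x j), g s
        rw [Set.Ioc_self, Finset.Icc_eq_empty (by omega)]
        simp
      intro k hk ih
      have hunion : Ioc (x i) (x (k+1)) = Ioc (x i) (x k) ∪ Ioc (x k) (x (k+1)) :=
        (Set.Ioc_union_Ioc_eq_Ioc (hxmono i k hi hk) (hxlt k (by omega)).le).symm
      have hins : Finset.Icc (i+1) (k+1) = insert (k+1) (Finset.Icc (i+1) k) := by
        ext m; simp only [Finset.mem_Icc, Finset.mem_insert]; omega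
      calc (∫⁻ s in Ioc (x i) (x (k+1)), g s)
          = ∫⁻ s in Ioc (x i) (x k) ∪ Ioc (x k) (x (k+1)), g s := by rw [hunion]
        _ ≤ (∫⁻ s in Ioc (x i) (x k), g s) + ∫⁻ s in Ioc (x k) (x (k+1)), g s :=
            lintegral_union_le _ _ _
        _ ≤ (∑ j ∈ Finset.Icc (i+1) k, ∫⁻ s in Ioc (x (j-1)) (x j), g s)
            + ∫⁻ s in Ioc (x k) (x (k+1)), g s := add_le_add_left ih _
        _ = ∑ j ∈ Finset.Icc (i+1) (k+1), ∫⁻ s in Ioc (x (j-1)) (x j), g s := by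
            rw [hins, Finset.sum_insert (by simp)]
            have : (k + 1 - 1 : ℤ) = k := by ring
            rw [this, add_comm]
    -- pointwise bound on the supremum
    have hsup : ∀ k : ℤ, n + 1 ≤ k →
        (⨆ (i : ℤ) (_ : n ≤ i ∧ i < k), (∫⁻ s in Ioo (x i) (x k), g s) ^ α * σ i)
        ≤ C1 * ∑ j ∈ Finset.Icc (n+1) k,
            θ ^ (-(((k:ℝ) - j) * α)) * ((∫⁻ s in Ioo (x (j-1)) (x j), g s) ^ α * σ (j-1)) := by
      intro k hk
      apply iSup₂_le
      rintro i ⟨hi1, hi2⟩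
      have hA : (∫⁻ s in Ioo (x i) (x k), g s)
          ≤ ∑ j ∈ Finset.Icc (i+1) k, (∫⁻ s in Ioo (x (j-1)) (x j), g s) := by
        calc (∫⁻ s in Ioo (x i) (x k), g s) ≤ ∫⁻ s in Ioc (x i) (x k), g s :=
              lintegral_mono_set Set.Ioo_subset_Ioc_self
          _ ≤ ∑ j ∈ Finset.Icc (i+1) k, ∫⁻ s in Ioc (x (j-1)) (x j), g s := hIoc i hi1 k hi2.le
          _ = ∑ j ∈ Finset.Icc (i+1) k, ∫⁻ s in Ioo (x (j-1)) (x j), g s :=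
              Finset.sum_congr rfl fun j hj => (setLIntegral_congr Ioo_ae_eq_Ioc).symm
      set W : ℤ → ℝ≥0∞ :=
        fun j => θ ^ (-((k:ℝ) - j)) * (∫⁻ s in Ioo (x (j-1)) (x j), g s) with hWdef
      have hsne : (Finset.Icc (i+1) k).Nonempty := ⟨k, by simp only [Finset.mem_Icc]; omega⟩
      obtain ⟨j₀, hj₀, hMj₀⟩ := Finset.exists_mem_eq_sup _ hsne W
      simp only [Finset.mem_Icc] at hj₀
      have hsum2 : ∑ j ∈ Finset.Icc (i+1) k, (∫⁻ s in Ioo (x (j-1)) (x j), g s)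
          ≤ (1-θ)⁻¹ * W j₀ := by
        have hterm : ∀ j ∈ Finset.Icc (i+1) k,
            (∫⁻ s in Ioo (x (j-1)) (x j), g s) ≤ θ ^ ((k:ℝ) - j) * W j₀ := by
          intro j hj
          have h1 : (∫⁻ s in Ioo (x (j-1)) (x j), g s) = θ ^ ((k:ℝ) - j) * W j := by
            simp only [hWdef]
            rw [← mul_assoc, ← ENNReal.rpow_add _ _ hθ0 hθt]
            simp
          rw [h1]
          exact mul_le_mul_right (hMj₀ ▸ Finset.le_sup hj) _
        calc ∑ j ∈ Finset.Icc (i+1) k, (∫⁻ s in Ioo (x (j-1)) (x j), g s)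
            ≤ ∑ j ∈ Finset.Icc (i+1) k, θ ^ ((k:ℝ) - j) * W j₀ := Finset.sum_le_sum hterm
          _ = (∑ j ∈ Finset.Icc (i+1) k, θ ^ ((k:ℝ) - j)) * W j₀ := (Finset.sum_mul _ _ _).symm
          _ ≤ (1-θ)⁻¹ * W j₀ := mul_le_mul_left (geom_finset_sum_le θ i k) _
      have hrp : (∫⁻ s in Ioo (x i) (x k), g s) ^ α ≤ C1 * (W j₀) ^ α := by
        calc (∫⁻ s in Ioo (x i) (x k), g s) ^ α ≤ ((1-θ)⁻¹ * W j₀) ^ α :=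
              ENNReal.rpow_le_rpow (hA.trans hsum2) hα.le
          _ = C1 * (W j₀) ^ α := ENNReal.mul_rpow_of_nonneg _ _ hα.le
      have hWα : (W j₀) ^ α = θ ^ (-(((k:ℝ) - j₀) * α)) * (∫⁻ s in Ioo (x (j₀-1)) (x j₀), g s) ^ α := by
        simp only [hWdef]
        rw [ENNReal.mul_rpow_of_nonneg _ _ hα.le, ← ENNReal.rpow_mul]
        congr 2
        ring
      calc (∫⁻ s in Ioo (x i) (x k), g s) ^ α * σ i ≤ (C1 * (W j₀) ^ α) * σ i :=
            mul_le_mul_left hrp _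
        _ = C1 * (θ ^ (-(((k:ℝ) - j₀) * α)) * ((∫⁻ s in Ioo (x (j₀-1)) (x j₀), g s) ^ α * σ i)) := by
            rw [hWα]; ring
        _ ≤ C1 * (θ ^ (-(((k:ℝ) - j₀) * α)) * ((∫⁻ s in Ioo (x (j₀-1)) (x j₀), g s) ^ α * σ (j₀-1))) := by
            apply mul_le_mul_right
            apply mul_le_mul_right
            exact mul_le_mul_right (hσle i (j₀ - 1) hi1 (by omega)) _
        _ ≤ C1 * ∑ j ∈ Finset.Icc (n+1) k,
              θ ^ (-(((k:ℝ) - j) * α)) * ((∫⁻ s in Ioo (x (j-1)) (x j), g s) ^ α * σ (j-1)) := by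
            apply mul_le_mul_right
            exact Finset.single_le_sum (f := fun j : ℤ =>
                θ ^ (-(((k:ℝ) - j) * α)) * ((∫⁻ s in Ioo (x (j-1)) (x j), g s) ^ α * σ (j-1)))
              (fun _ _ => bot_le) (Finset.mem_Icc.mpr ⟨by omega, by omega⟩)
    calc (∑' k : {k : ℤ // n + 1 ≤ k},
            τ k.1 * ⨆ (i : ℤ) (_ : n ≤ i ∧ i < k.1),
              (∫⁻ s in Ioo (x i) (x k.1), g s) ^ α * σ i)
        ≤ ∑' k : {k : ℤ // n + 1 ≤ k}, C1 * (τ k.1 * ∑ j ∈ Finset.Icc (n+1) k.1,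
            θ ^ (-(((k.1:ℝ) - j) * α)) * ((∫⁻ s in Ioo (x (j-1)) (x j), g s) ^ α * σ (j-1))) := by
          apply ENNReal.tsum_le_tsum
          intro k
          calc τ k.1 * (⨆ (i : ℤ) (_ : n ≤ i ∧ i < k.1),
                (∫⁻ s in Ioo (x i) (x k.1), g s) ^ α * σ i)
              ≤ τ k.1 * (C1 * ∑ j ∈ Finset.Icc (n+1) k.1,
                θ ^ (-(((k.1:ℝ) - j) * α)) * ((∫⁻ s in Ioo (x (j-1)) (x j), g s) ^ α * σ (j-1))) :=
                mul_le_mul_right (hsup k.1 k.2) _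
            _ = C1 * (τ k.1 * ∑ j ∈ Finset.Icc (n+1) k.1,
                θ ^ (-(((k.1:ℝ) - j) * α)) * ((∫⁻ s in Ioo (x (j-1)) (x j), g s) ^ α * σ (j-1))) := by
                ring
      _ ≤ ∑' k : {k : ℤ // n + 1 ≤ k}, C1 * ∑ j ∈ Finset.Icc (n+1) k.1,
            q ^ ((k.1:ℝ) - j) * (τ j * ((∫⁻ s in Ioo (x (j-1)) (x j), g s) ^ α * σ (j-1))) := by
          apply ENNReal.tsum_le_tsum
          intro k
          apply mul_le_mul_right
          rw [Finset.mul_sum]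
          apply Finset.sum_le_sum
          intro j hj
          simp only [Finset.mem_Icc] at hj
          calc τ k.1 * (θ ^ (-(((k.1:ℝ) - j) * α)) *
                ((∫⁻ s in Ioo (x (j-1)) (x j), g s) ^ α * σ (j-1)))
              = (τ k.1 * θ ^ (-(((k.1:ℝ) - j) * α))) *
                ((∫⁻ s in Ioo (x (j-1)) (x j), g s) ^ α * σ (j-1)) := (mul_assoc _ _ _).symm
            _ ≤ (q ^ ((k.1:ℝ) - j) * τ j) *
                ((∫⁻ s in Ioo (x (j-1)) (x j), g s) ^ α * σ (j-1)) :=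
                mul_le_mul_left (hkey j k.1 hj.1 hj.2) _
            _ = q ^ ((k.1:ℝ) - j) *
                (τ j * ((∫⁻ s in Ioo (x (j-1)) (x j), g s) ^ α * σ (j-1))) := mul_assoc _ _ _
      _ = C1 * ∑' k : {k : ℤ // n + 1 ≤ k}, ∑ j ∈ Finset.Icc (n+1) k.1,
            q ^ ((k.1:ℝ) - j) * (τ j * ((∫⁻ s in Ioo (x (j-1)) (x j), g s) ^ α * σ (j-1))) :=
          ENNReal.tsum_mul_left
      _ ≤ C1 * ((1-q)⁻¹ * ∑' j : {k : ℤ // n + 1 ≤ k},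
            τ j.1 * ((∫⁻ s in Ioo (x (j.1-1)) (x j.1), g s) ^ α * σ (j.1-1))) := by
          apply mul_le_mul_right
          have h1 : ∀ k : {k : ℤ // n + 1 ≤ k},
              (∑ j ∈ Finset.Icc (n+1) k.1,
                q ^ ((k.1:ℝ) - j) * (τ j * ((∫⁻ s in Ioo (x (j-1)) (x j), g s) ^ α * σ (j-1))))
              = ∑' j : ℤ, (if n + 1 ≤ j ∧ j ≤ k.1 then
                  q ^ ((k.1:ℝ) - j) * (τ j * ((∫⁻ s in Ioo (x (j-1)) (x j), g s) ^ α * σ (j-1)))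
                else 0) := by
            intro k
            rw [tsum_eq_sum (s := Finset.Icc (n+1) k.1)
              (fun j hj => if_neg (by simpa [Finset.mem_Icc] using hj))]
            exact Finset.sum_congr rfl fun j hj =>
              (if_pos (by simpa [Finset.mem_Icc] using hj)).symm
          calc (∑' k : {k : ℤ // n + 1 ≤ k}, ∑ j ∈ Finset.Icc (n+1) k.1,
                q ^ ((k.1:ℝ) - j) * (τ j * ((∫⁻ s in Ioo (x (j-1)) (x j), g s) ^ α * σ (j-1))))
              = ∑' k : {k : ℤ // n + 1 ≤ k}, ∑' j : ℤ, (if n + 1 ≤ j ∧ j ≤ k.1 then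
                  q ^ ((k.1:ℝ) - j) * (τ j * ((∫⁻ s in Ioo (x (j-1)) (x j), g s) ^ α * σ (j-1)))
                else 0) := tsum_congr h1
            _ = ∑' j : ℤ, ∑' k : {k : ℤ // n + 1 ≤ k}, (if n + 1 ≤ j ∧ j ≤ k.1 then
                  q ^ ((k.1:ℝ) - j) * (τ j * ((∫⁻ s in Ioo (x (j-1)) (x j), g s) ^ α * σ (j-1)))
                else 0) := ENNReal.tsum_comm
            _ ≤ ∑' j : ℤ, (if n + 1 ≤ j then
                  (1-q)⁻¹ * (τ j * ((∫⁻ s in Ioo (x (j-1)) (x j), g s) ^ α * σ (j-1)))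
                else 0) := by
                apply ENNReal.tsum_le_tsum
                intro j
                by_cases hj : n + 1 ≤ j
                · simp only [hj, true_and, if_true]
                  have h2 : ∀ k : {k : ℤ // n + 1 ≤ k}, (if j ≤ k.1 then
                      q ^ ((k.1:ℝ) - j) * (τ j * ((∫⁻ s in Ioo (x (j-1)) (x j), g s) ^ α * σ (j-1)))
                    else 0)
                      = (if j ≤ k.1 then q ^ ((k.1:ℝ) - j) else 0) *
                        (τ j * ((∫⁻ s in Ioo (x (j-1)) (x j), g s) ^ α * σ (j-1))) := by
                    intro k; split <;> simp
                  rw [tsum_congr h2, ENNReal.tsum_mul_right]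
                  exact mul_le_mul_left (geom_tail_le q n j hj) _
                · simp [hj]
            _ = (1-q)⁻¹ * ∑' j : ℤ, (if n + 1 ≤ j then
                  τ j * ((∫⁻ s in Ioo (x (j-1)) (x j), g s) ^ α * σ (j-1)) else 0) := by
                rw [← ENNReal.tsum_mul_left]
                exact tsum_congr fun j => by split <;> simp
            _ = (1-q)⁻¹ * ∑' j : {k : ℤ // n + 1 ≤ k},
                  τ j.1 * ((∫⁻ s in Ioo (x (j.1-1)) (x j.1), g s) ^ α * σ (j.1-1)) := by
                congr 1
                symm
                refine (tsum_subtype {j : ℤ | n + 1 ≤ j}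
                  (fun j => τ j * ((∫⁻ s in Ioo (x (j-1)) (x j), g s) ^ α * σ (j-1)))).trans
                  (tsum_congr fun j => ?_)
                by_cases h : n + 1 ≤ j <;>
                  simp [Set.indicator_apply, Set.mem_setOf_eq, h] <;> (intro _; omega)
      _ = (C1 * (1-q)⁻¹) * ∑' k : {k : ℤ // n + 1 ≤ k},
            τ k.1 * ((∫⁻ s in Ioo (x (k.1-1)) (x k.1), g s) ^ α * σ (k.1-1)) :=
          (mul_assoc _ _ _).symm
end
end

section
/- Let -∞ ≤ a < b ≤ ∞, let α > 0, let w be a weight on (a,b) with 0 < W(t) := ∫_t^b w < ∞ for all t ∈ (a,b), and let {x_k}_{k=N}^∞ (N ∈ ℤ) be a discretizing sequence of W, i.e. a strictly increasing sequence in [a,b] with x_N = a and d₁ 2^{-k} ≤ W(x_k) ≤ d₂ 2^{-k} for all k ≥ N, for some constants 0 < d₁ ≤ d₂. Then there exist positive constants c₁, c₂ (depending only on α, d₁, d₂) such that for every n ≥ N and every nonnegative nondecreasing function h on (a,b): c₁ · Σ_{k=n+1}^∞ 2^{-kα} h(x_k) ≤ ∫_{x_n}^b W(x)^{α-1} w(x)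 h(x) dx ≤ c₂ · Σ_{k=n+1}^∞ 2^{-kα} h(x_k). -/
open MeasureTheory ENNReal Set

noncomputable section

/-- `𝒲(x) = ∫_x^b w(s) ds`. -/
def Wf (w : ℝ → ℝ≥0∞) (b : EReal) (x : EReal) : ℝ≥0∞ := ∫⁻ s in Iab x b, w s

lemma aux_rpow_ne_top {x : ℝ≥0∞} (h0 : x ≠ 0) (ht : x ≠ ⊤) (γ : ℝ) : x ^ γ ≠ ⊤ := by
  rcases le_or_gt 0 γ with hγ | hγ
  · exact (ENNReal.rpow_lt_top_of_nonneg hγ ht).ne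
  · have : x ^ γ = (x ^ (-γ))⁻¹ := by rw [← ENNReal.rpow_neg, neg_neg]
    rw [this]
    exact ENNReal.inv_ne_top.2 (ENNReal.rpow_pos (pos_iff_ne_zero.2 h0) ht).ne'

lemma aux_rpow_ne_zero {x : ℝ≥0∞} (h0 : x ≠ 0) (ht : x ≠ ⊤) (γ : ℝ) : x ^ γ ≠ 0 := by
  rcases le_or_gt 0 γ with hγ | hγ
  · exact (ENNReal.rpow_pos (pos_iff_ne_zero.2 h0) ht).ne'
  · have : x ^ γ = (x ^ (-γ))⁻¹ := by rw [← ENNReal.rpow_neg, neg_neg]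
    rw [this]
    exact ENNReal.inv_ne_zero.2 (ENNReal.rpow_lt_top_of_nonneg (by linarith) ht).ne

lemma aux_rpow_anti {x y : ℝ≥0∞} (h : x ≤ y) {γ : ℝ} (hγ : γ ≤ 0) : y ^ γ ≤ x ^ γ := by
  have hy : y ^ γ = (y ^ (-γ))⁻¹ := by rw [← ENNReal.rpow_neg, neg_neg]
  have hx : x ^ γ = (x ^ (-γ))⁻¹ := by rw [← ENNReal.rpow_neg, neg_neg]
  rw [hy, hx]
  exact ENNReal.inv_le_inv.2 (ENNReal.rpow_le_rpow h (by linarith : (0:ℝ) ≤ -γ))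

lemma aux_sandwich_hi {A B X : ℝ≥0∞} (γ : ℝ) (hA : A ≤ X) (hB : X ≤ B) :
    X ^ γ ≤ A ^ γ + B ^ γ := by
  rcases le_or_gt 0 γ with hγ | hγ
  · exact le_add_of_nonneg_of_le zero_le (ENNReal.rpow_le_rpow hB hγ)
  · exact le_add_of_le_of_nonneg (aux_rpow_anti hA hγ.le) zero_le

lemma aux_sandwich_lo {A B X : ℝ≥0∞} (γ : ℝ) (hA : A ≤ X) (hB : X ≤ B) :
    min (A ^ γ) (B ^ γ) ≤ X ^ γ := by
  rcases le_or_gt 0 γ with hγ | hγ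
  · exact (min_le_left _ _).trans (ENNReal.rpow_le_rpow hA hγ)
  · exact (min_le_right _ _).trans (aux_rpow_anti hB hγ.le)

lemma aux_two_rpow_ne_zero (r : ℝ) : (2:ℝ≥0∞) ^ r ≠ 0 :=
  aux_rpow_ne_zero two_ne_zero ENNReal.ofNat_ne_top r

lemma aux_two_rpow_ne_top (r : ℝ) : (2:ℝ≥0∞) ^ r ≠ ⊤ :=
  aux_rpow_ne_top two_ne_zero ENNReal.ofNat_ne_top r

lemma aux_two_rpow_add (u v : ℝ) : (2:ℝ≥0∞) ^ (u + v) = 2 ^ u * 2 ^ v :=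
  ENNReal.rpow_add u v two_ne_zero ENNReal.ofNat_ne_top

lemma exists_shrink {c E : ℝ≥0∞} (hc : c ≠ ⊤) (hE : 0 < E) :
    ∃ j : ℕ, c * (2:ℝ≥0∞) ^ (-(j:ℝ)) < E := by
  rcases eq_or_ne E ⊤ with rfl | hEt
  · exact ⟨0, lt_top_iff_ne_top.2 (ENNReal.mul_ne_top hc (aux_two_rpow_ne_top _))⟩
  · obtain ⟨jn, hjn⟩ := ENNReal.exists_nat_gt (ENNReal.div_lt_top hc hE.ne').ne
    refine ⟨jn, ?_⟩
    have h1 : c / E < (2:ℝ≥0∞) ^ jn := by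
      refine hjn.trans_le ?_
      calc ((jn:ℝ≥0∞)) ≤ ((2^jn : ℕ) : ℝ≥0∞) := by exact_mod_cast (Nat.lt_two_pow_self (n := jn)).le
      _ = (2:ℝ≥0∞) ^ jn := by push_cast; ring
    have h2 : c < (2:ℝ≥0∞) ^ jn * E := (ENNReal.div_lt_iff (Or.inl hE.ne') (Or.inl hEt)).1 h1
    have hpow0 : ((2:ℝ≥0∞) ^ jn) ≠ 0 := pow_ne_zero _ two_ne_zero
    have hpowt : ((2:ℝ≥0∞) ^ jn) ≠ ⊤ := (pow_ne_top ENNReal.ofNat_ne_top)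
    have hrw : (2:ℝ≥0∞) ^ (-(jn:ℝ)) = ((2:ℝ≥0∞) ^ jn)⁻¹ := by
      rw [ENNReal.rpow_neg, ENNReal.rpow_natCast]
    rw [hrw, ← ENNReal.mul_lt_mul_iff_left hpow0 hpowt, mul_assoc,
      ENNReal.inv_mul_cancel hpow0 hpowt, mul_one]
    exact h2.trans_le (by rw [mul_comm])

def aux_eqv (n : ℤ) : ℕ ≃ {k : ℤ // n < k} where
  toFun i := ⟨n + 1 + i, by omega⟩
  invFun k := (k.1 - (n + 1)).toNat
  left_inv i := by simp
  right_inv k := by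
    ext
    have := k.2
    simp only
    omega

/-- Summand. -/
def auxT (α : ℝ) (x : ℤ → EReal) (h : ℝ → ℝ≥0∞) (k : ℤ) : ℝ≥0∞ :=
  (2 : ℝ≥0∞) ^ (-((k : ℝ) * α)) * h (x k).toReal

/-- Half-open pieces. -/
def auxJJ (b : EReal) (x : ℤ → EReal) (k l : ℤ) : Set ℝ :=
  {s : ℝ | x k < (s : EReal) ∧ (s : EReal) ≤ x l ∧ (s : EReal) < b}

lemma auxJJ_meas (b : EReal) (x : ℤ → EReal) (k l : ℤ) : MeasurableSet (auxJJ b x k l) := by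
  have : auxJJ b x k l =
      Real.toEReal ⁻¹' (Ioi (x k)) ∩ (Real.toEReal ⁻¹' (Iic (x l)) ∩ Real.toEReal ⁻¹' (Iio b)) := by
    ext s; simp [auxJJ, and_assoc]
  rw [this]
  exact (measurable_coe_real_ereal measurableSet_Ioi).inter
    ((measurable_coe_real_ereal measurableSet_Iic).inter
      (measurable_coe_real_ereal measurableSet_Iio))

theorem statement13 (α : ℝ) (hα : 0 < α) (d₁ d₂ : ℝ≥0∞) (hd₁ : 0 < d₁) (hd₂ : d₂ < ∞)
    (hd : d₁ ≤ d₂) :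
    ∃ c₁ c₂ : ℝ≥0∞, 0 < c₁ ∧ c₂ < ∞ ∧
      ∀ (a b : EReal), a < b →
      ∀ w : ℝ → ℝ≥0∞, Measurable w →
        (∀ x ∈ Iab a b, 0 < w x ∧ w x < ∞) →
        (∀ t ∈ Iab a b, 0 < Wf w b (t : EReal) ∧ Wf w b (t : EReal) < ∞) →
      ∀ (N : ℤ) (x : ℤ → EReal),
        x N = a →
        (∀ k, N ≤ k → x k < x (k + 1)) →
        (∀ k, N ≤ k → a ≤ x k ∧ x k ≤ b) →
        (∀ k, N < k → x k ≠ ⊥ ∧ x k ≠ ⊤) →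
        (∀ k, N ≤ k → d₁ * (2 : ℝ≥0∞) ^ (-(k : ℝ)) ≤ Wf w b (x k) ∧
          Wf w b (x k) ≤ d₂ * (2 : ℝ≥0∞) ^ (-(k : ℝ))) →
        ∀ n : ℤ, N ≤ n →
        ∀ h : ℝ → ℝ≥0∞, MonotoneOn h (Iab a b) →
          c₁ * (∑' k : {k : ℤ // n < k},
                (2 : ℝ≥0∞) ^ (-((k.1 : ℝ) * α)) * h (x k.1).toReal) ≤
              (∫⁻ s in Iab (x n) b, Wf w b (s : EReal) ^ (α - 1) * w s * h s) ∧
            (∫⁻ s in Iab (x n) b, Wf w b (s : EReal) ^ (α - 1) * w s * h s) ≤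
              c₂ * ∑' k : {k : ℤ // n < k},
                (2 : ℝ≥0∞) ^ (-((k.1 : ℝ) * α)) * h (x k.1).toReal := by
  classical
  have hd₁t : d₁ ≠ ⊤ := (lt_of_le_of_lt hd hd₂).ne
  have hd₂0 : d₂ ≠ 0 := (hd₁.trans_le hd).ne'
  -- choose the gap m
  obtain ⟨m', hm'⟩ := exists_shrink hd₂.ne hd₁
  set m : ℕ := m' + 1 with hm
  have hmlt : d₂ * (2:ℝ≥0∞) ^ (-(m:ℝ)) < d₁ := by
    refine lt_of_le_of_lt (mul_le_mul_right ?_ d₂) hm'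
    exact ENNReal.rpow_le_rpow_of_exponent_le one_le_two (by push_cast [hm]; linarith)
  set γ : ℝ := α - 1 with hγdef
  set Cp : ℝ≥0∞ := (d₁ * 2 ^ (-(1:ℝ))) ^ γ + d₂ ^ γ with hCpdef
  set Cm : ℝ≥0∞ := min ((d₁ * 2 ^ (-(m:ℝ))) ^ γ) (d₂ ^ γ) with hCmdef
  set ε : ℝ≥0∞ := d₁ - d₂ * 2 ^ (-(m:ℝ)) with hεdef
  set Mden : ℝ≥0∞ := (m : ℝ≥0∞) * 2 ^ (((m:ℝ) - 1) * α) with hMdendef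
  have hd₁2ne0 : d₁ * (2:ℝ≥0∞) ^ (-(1:ℝ)) ≠ 0 := mul_ne_zero hd₁.ne' (aux_two_rpow_ne_zero _)
  have hd₁2net : d₁ * (2:ℝ≥0∞) ^ (-(1:ℝ)) ≠ ⊤ := ENNReal.mul_ne_top hd₁t (aux_two_rpow_ne_top _)
  have hd₁mne0 : d₁ * (2:ℝ≥0∞) ^ (-(m:ℝ)) ≠ 0 := mul_ne_zero hd₁.ne' (aux_two_rpow_ne_zero _)
  have hd₁mnet : d₁ * (2:ℝ≥0∞) ^ (-(m:ℝ)) ≠ ⊤ := ENNReal.mul_ne_top hd₁t (aux_two_rpow_ne_top _)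
  have hCp0 : Cp ≠ 0 := by
    rw [hCpdef]
    exact fun hc => (aux_rpow_ne_zero hd₁2ne0 hd₁2net γ) (by simpa using (add_eq_zero.1 hc).1)
  have hCpt : Cp ≠ ⊤ :=
    ENNReal.add_ne_top.2 ⟨aux_rpow_ne_top hd₁2ne0 hd₁2net γ, aux_rpow_ne_top hd₂0 hd₂.ne γ⟩
  have hCm0 : Cm ≠ 0 := by
    rw [hCmdef]
    intro hc
    rcases min_eq_iff.1 hc with ⟨hc', _⟩ | ⟨hc', _⟩
    · exact aux_rpow_ne_zero hd₁mne0 hd₁mnet γ hc'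
    · exact aux_rpow_ne_zero hd₂0 hd₂.ne γ hc'
  have hCmt : Cm ≠ ⊤ :=
    ne_top_of_le_ne_top (aux_rpow_ne_top hd₂0 hd₂.ne γ) (min_le_right _ _)
  have hε0 : ε ≠ 0 := (tsub_pos_iff_lt.2 hmlt).ne'
  have hεt : ε ≠ ⊤ := ne_top_of_le_ne_top hd₁t tsub_le_self
  have hM0 : Mden ≠ 0 := mul_ne_zero (by rw [Nat.cast_ne_zero]; omega) (aux_two_rpow_ne_zero _)
  have hMt : Mden ≠ ⊤ := ENNReal.mul_ne_top (ENNReal.natCast_ne_top m) (aux_two_rpow_ne_top _)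
  have hc₁0 : (Cm * ε) * Mden⁻¹ ≠ 0 :=
    mul_ne_zero (mul_ne_zero hCm0 hε0) (ENNReal.inv_ne_zero.2 hMt)
  have hc₂0 : (Cp * d₂) * (2:ℝ≥0∞) ^ α ≠ 0 :=
    mul_ne_zero (mul_ne_zero hCp0 hd₂0) (aux_two_rpow_ne_zero _)
  have hc₂t : (Cp * d₂) * (2:ℝ≥0∞) ^ α ≠ ⊤ :=
    ENNReal.mul_ne_top (ENNReal.mul_ne_top hCpt hd₂.ne) (aux_two_rpow_ne_top _)
  refine ⟨(Cm * ε) * Mden⁻¹, (Cp * d₂) * (2:ℝ≥0∞) ^ α, pos_iff_ne_zero.2 hc₁0,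
    lt_top_iff_ne_top.2 hc₂t, ?_⟩
  intro a b hab w hw hwpos hWpos N x hxN hxsucc hxab hxfin hWbd n hn h hmono
  have hm1 : 1 ≤ (m:ℤ) := by exact_mod_cast Nat.one_le_iff_ne_zero.2 (Nat.succ_ne_zero m')
  -- basic monotonicity facts
  have Wanti : ∀ {s t : EReal}, s ≤ t → Wf w b t ≤ Wf w b s := by
    intro s t hst
    exact lintegral_mono_set (fun r hr => ⟨lt_of_le_of_lt hst hr.1, hr.2⟩)
  have xle : ∀ k l : ℤ, N ≤ k → k ≤ l → x k ≤ x l := by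
    intro k l hk hkl
    have key : ∀ j : ℕ, x k ≤ x (k + j) := by
      intro j
      induction j with
      | zero => simp
      | succ i ih =>
        refine ih.trans (le_of_lt ?_)
        have := hxsucc (k + i) (by omega)
        convert this using 2
        omega
    have := key (l - k).toNat
    convert this using 2
    omega
  have xlt : ∀ k l : ℤ, N ≤ k → k < l → x k < x l := by
    intro k l hk hkl
    exact lt_of_lt_of_le (hxsucc k hk) (xle (k+1) l (by omega) (by omega))
  have hxltb : ∀ k : ℤ, N ≤ k → x k < b := by
    intro k hk
    by_contra hc
    push_neg at hc
    have hempty : Iab (x k) b = ∅ := by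
      ext s
      simp only [Iab, mem_setOf_eq, mem_empty_iff_false, iff_false, not_and]
      intro h1 h2
      exact absurd (lt_trans h1 h2) (not_lt.2 hc)
    have h0 : Wf w b (x k) = 0 := by
      rw [Wf, hempty, Measure.restrict_empty, lintegral_zero_measure]
    have := (hWbd k hk).1
    rw [h0] at this
    exact mul_ne_zero hd₁.ne' (aux_two_rpow_ne_zero _) (le_zero_iff.1 this)
  have hxgta : ∀ k : ℤ, N < k → a < x k := fun k hk => by
    rw [← hxN]; exact xlt N k le_rfl hk
  have hcoe : ∀ k : ℤ, N < k → ((x k).toReal : EReal) = x k :=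
    fun k hk => EReal.coe_toReal (hxfin k hk).2 (hxfin k hk).1
  have hmem : ∀ k : ℤ, N < k → (x k).toReal ∈ Iab a b := by
    intro k hk
    constructor
    · rw [hcoe k hk]; exact hxgta k hk
    · rw [hcoe k hk]; exact hxltb k hk.le
  have smem : ∀ (k:ℤ), N ≤ k → ∀ s : ℝ, x k < (s:EReal) → (s:EReal) < b → s ∈ Iab a b := by
    intro k hk s h1 h2
    exact ⟨lt_of_le_of_lt (hxab k hk).1 h1, h2⟩
  have hWub : ∀ (k:ℤ), N ≤ k → ∀ s : ℝ, x k < (s:EReal) →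
      Wf w b s ≤ d₂ * 2 ^ (-(k:ℝ)) :=
    fun k hk s hs => (Wanti hs.le).trans (hWbd k hk).2
  have hWlb : ∀ (l:ℤ), N ≤ l → ∀ s : ℝ, (s:EReal) ≤ x l →
      d₁ * 2 ^ (-(l:ℝ)) ≤ Wf w b s :=
    fun l hl s hs => (hWbd l hl).1.trans (Wanti hs)
  -- power collapsing identity
  have l1 : ∀ k : ℤ, ((2:ℝ≥0∞) ^ (-(k:ℝ))) ^ γ * (2:ℝ≥0∞) ^ (-(k:ℝ))
      = (2:ℝ≥0∞) ^ (-((k:ℝ) * α)) := by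
    intro k
    rw [← ENNReal.rpow_mul, ← aux_two_rpow_add]
    congr 1
    rw [hγdef]; ring
  -- the goal sum, reindexed over ℕ
  have hSgoal : (∑' k : {k : ℤ // n < k},
      (2 : ℝ≥0∞) ^ (-((k.1 : ℝ) * α)) * h (x k.1).toReal)
      = ∑' i : ℕ, auxT α x h (n + 1 + i) :=
    (Equiv.tsum_eq (aux_eqv n) (fun k => auxT α x h k.1)).symm
  rw [hSgoal]
  by_cases htop : ∃ k : ℤ, n < k ∧ h ((x k).toReal) = ⊤
  · -- degenerate case: the sum is infinite and so is the integral
    obtain ⟨k₀, hk₀, hk₀top⟩ := htop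
    have hStop : (∑' i : ℕ, auxT α x h (n + 1 + i)) = ⊤ := by
      refine top_le_iff.1 ?_
      have : auxT α x h (n + 1 + ((k₀ - (n+1)).toNat : ℕ)) = ⊤ := by
        rw [auxT, show (n + 1 + ((k₀ - (n+1)).toNat : ℤ)) = k₀ by omega, hk₀top,
          ENNReal.mul_top (aux_two_rpow_ne_zero _)]
      exact this.symm.trans_le (ENNReal.le_tsum _)
    have hinttop : (∫⁻ s in Iab (x n) b, Wf w b (s : EReal) ^ γ * w s * h s) = ⊤ := by
      refine top_le_iff.1 ?_
      have hk₀N : N < k₀ := by omega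
      have hk₁N : N < k₀ + 1 := by omega
      have htlt : (x k₀).toReal < (x (k₀+1)).toReal := by
        rw [← EReal.coe_lt_coe_iff, hcoe k₀ hk₀N, hcoe (k₀+1) hk₁N]
        exact hxsucc k₀ (by omega)
      have hvol : volume (Ioo ((x k₀).toReal) ((x (k₀+1)).toReal)) ≠ 0 := by
        rw [Real.volume_Ioo]
        exact (ENNReal.ofReal_pos.2 (by linarith)).ne'
      have hsub : Ioo ((x k₀).toReal) ((x (k₀+1)).toReal) ⊆ Iab (x n) b := by
        intro s hs
        have h1 : x k₀ < (s:EReal) := by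
          rw [← hcoe k₀ hk₀N]; exact_mod_cast hs.1
        have h2 : (s:EReal) < b := by
          refine lt_of_lt_of_le ?_ (hxab (k₀+1) (by omega)).2
          rw [← hcoe (k₀+1) hk₁N]; exact_mod_cast hs.2
        exact ⟨lt_of_le_of_lt (xle n k₀ hn hk₀.le) h1, h2⟩
      have hpt : ∀ s ∈ Ioo ((x k₀).toReal) ((x (k₀+1)).toReal),
          Wf w b (s : EReal) ^ γ * w s * h s = ⊤ := by
        intro s hs
        have hsab : s ∈ Iab a b := by
          have := hsub hs
          exact smem n hn s this.1 this.2
        have hhs : h s = ⊤ := by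
          refine top_le_iff.1 ?_
          rw [← hk₀top]
          exact hmono (hmem k₀ hk₀N) hsab hs.1.le
        rw [hhs, ENNReal.mul_top
          (mul_ne_zero (aux_rpow_ne_zero (hWpos s hsab).1.ne' (hWpos s hsab).2.ne _)
            (hwpos s hsab).1.ne')]
      calc (⊤:ℝ≥0∞) = ⊤ * volume (Ioo ((x k₀).toReal) ((x (k₀+1)).toReal)) := by
            rw [ENNReal.top_mul hvol]
        _ = ∫⁻ _ in Ioo ((x k₀).toReal) ((x (k₀+1)).toReal), (⊤:ℝ≥0∞) :=
            (setLIntegral_const _ _).symm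
        _ ≤ ∫⁻ s in Ioo ((x k₀).toReal) ((x (k₀+1)).toReal),
              Wf w b (s : EReal) ^ γ * w s * h s :=
            setLIntegral_mono' measurableSet_Ioo (fun s hs => (hpt s hs).ge)
        _ ≤ ∫⁻ s in Iab (x n) b, Wf w b (s : EReal) ^ γ * w s * h s :=
            lintegral_mono_set hsub
    rw [hStop, hinttop]
    constructor
    · rw [ENNReal.mul_top hc₁0]
    · rw [ENNReal.mul_top hc₂0]
  · push_neg at htop
    have hfin : ∀ k : ℤ, n < k → h ((x k).toReal) ≠ ⊤ := htop
    -- upper bound, per piece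
    have key_ub : ∀ k : ℤ, n ≤ k →
        (∫⁻ s in auxJJ b x k (k+1), Wf w b (s : EReal) ^ γ * w s * h s)
          ≤ ((Cp * d₂) * (2:ℝ≥0∞) ^ α) * auxT α x h (k+1) := by
      intro k hk
      have hk1N : N < k + 1 := by omega
      set C : ℝ≥0∞ := Cp * ((2:ℝ≥0∞) ^ (-(k:ℝ))) ^ γ * h ((x (k+1)).toReal) with hC
      have hCne : C ≠ ⊤ :=
        ENNReal.mul_ne_top (ENNReal.mul_ne_top hCpt
          (aux_rpow_ne_top (aux_two_rpow_ne_zero _) (aux_two_rpow_ne_top _) _))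
          (hfin (k+1) (by omega))
      have hpt : ∀ s ∈ auxJJ b x k (k+1),
          Wf w b (s : EReal) ^ γ * w s * h s ≤ C * w s := by
        intro s hs
        obtain ⟨hs1, hs2, hs3⟩ := hs
        have hWle : Wf w b s ≤ d₂ * 2 ^ (-(k:ℝ)) := hWub k (by omega) s hs1
        have hWge : (d₁ * 2 ^ (-(1:ℝ))) * 2 ^ (-(k:ℝ)) ≤ Wf w b s := by
          refine le_trans (le_of_eq ?_) (hWlb (k+1) (by omega) s hs2)
          rw [mul_assoc, ← aux_two_rpow_add]
          congr 2
          push_cast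
          ring
        have hrp : Wf w b (s : EReal) ^ γ ≤ Cp * ((2:ℝ≥0∞) ^ (-(k:ℝ))) ^ γ := by
          refine (aux_sandwich_hi γ hWge hWle).trans (le_of_eq ?_)
          rw [ENNReal.mul_rpow_of_ne_top hd₁2net (aux_two_rpow_ne_top _),
            ENNReal.mul_rpow_of_ne_top hd₂.ne (aux_two_rpow_ne_top _), hCpdef, add_mul]
        have hh : h s ≤ h ((x (k+1)).toReal) := by
          refine hmono (smem k (by omega) s hs1 hs3) (hmem (k+1) hk1N) ?_
          rw [← EReal.coe_le_coe_iff, hcoe (k+1) hk1N]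
          exact hs2
        calc Wf w b (s : EReal) ^ γ * w s * h s
            ≤ (Cp * ((2:ℝ≥0∞) ^ (-(k:ℝ))) ^ γ) * w s * h ((x (k+1)).toReal) := by
              exact mul_le_mul' (mul_le_mul_left hrp _) hh
          _ = C * w s := by rw [hC]; ring
      have hsub : auxJJ b x k (k+1) ⊆ Iab (x k) b := fun s hs => ⟨hs.1, hs.2.2⟩
      calc (∫⁻ s in auxJJ b x k (k+1), Wf w b (s : EReal) ^ γ * w s * h s)
          ≤ ∫⁻ s in auxJJ b x k (k+1), C * w s := setLIntegral_mono' (auxJJ_meas _ _ _ _) hpt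
        _ = C * ∫⁻ s in auxJJ b x k (k+1), w s := lintegral_const_mul' _ _ hCne
        _ ≤ C * (d₂ * 2 ^ (-(k:ℝ))) := by
            refine mul_le_mul_right ?_ _
            exact le_trans (lintegral_mono_set hsub) (hWbd k (by omega)).2
        _ = ((Cp * d₂) * (2:ℝ≥0∞) ^ α) * auxT α x h (k+1) := by
            rw [hC]; simp only [auxT]
            have r1 : (2:ℝ≥0∞) ^ α * (2:ℝ≥0∞) ^ (-(((k+1:ℤ):ℝ) * α))
                = (2:ℝ≥0∞) ^ (-((k:ℝ) * α)) := by
              rw [← aux_two_rpow_add]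
              congr 1
              push_cast
              ring
            calc Cp * ((2:ℝ≥0∞) ^ (-(k:ℝ))) ^ γ * h ((x (k+1)).toReal) * (d₂ * 2 ^ (-(k:ℝ)))
                = (Cp * d₂) * h ((x (k+1)).toReal)
                    * (((2:ℝ≥0∞) ^ (-(k:ℝ))) ^ γ * (2:ℝ≥0∞) ^ (-(k:ℝ))) := by ring
              _ = (Cp * d₂) * h ((x (k+1)).toReal) * (2:ℝ≥0∞) ^ (-((k:ℝ) * α)) := by
                  rw [l1 k]
              _ = (Cp * d₂) * h ((x (k+1)).toReal)
                    * ((2:ℝ≥0∞) ^ α * (2:ℝ≥0∞) ^ (-(((k+1:ℤ):ℝ) * α))) := by rw [r1]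
              _ = ((Cp * d₂) * (2:ℝ≥0∞) ^ α)
                    * ((2:ℝ≥0∞) ^ (-(((k+1:ℤ):ℝ) * α)) * h ((x (k+1)).toReal)) := by ring
    -- covering for the upper bound
    have cover : Iab (x n) b ⊆ ⋃ i : ℕ, auxJJ b x (n + i) (n + i + 1) := by
      intro s hs
      have hsab : s ∈ Iab a b := smem n hn s hs.1 hs.2
      have hWs := hWpos s hsab
      have hex : ∃ i : ℕ, (s:EReal) ≤ x (n + 1 + i) := by
        by_contra hc
        push_neg at hc
        obtain ⟨j, hj⟩ := exists_shrink
          (c := d₂ * 2 ^ (-((n:ℝ)+1))) (ENNReal.mul_ne_top hd₂.ne (aux_two_rpow_ne_top _)) hWs.1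
        have h1 : Wf w b s ≤ d₂ * 2 ^ (-(((n + 1 + (j:ℤ) : ℤ)) : ℝ)) :=
          le_trans (Wanti (hc j).le) (hWbd _ (by omega)).2
        have h2 : d₂ * (2:ℝ≥0∞) ^ (-(((n + 1 + (j:ℤ) : ℤ)) : ℝ))
            = d₂ * 2 ^ (-((n:ℝ)+1)) * 2 ^ (-(j:ℝ)) := by
          rw [mul_assoc, ← aux_two_rpow_add]
          congr 2
          push_cast
          ring
        rw [h2] at h1
        exact absurd (h1.trans_lt hj) (lt_irrefl _)
      set i0 := Nat.find hex with hi0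
      have hspec : (s:EReal) ≤ x (n + 1 + i0) := Nat.find_spec hex
      refine mem_iUnion.2 ⟨i0, ?_, ?_, hs.2⟩
      · rcases Nat.eq_zero_or_pos i0 with h0 | hpos
        · rw [h0]
          simpa using hs.1
        · have hmin := Nat.find_min hex (Nat.sub_one_lt hpos.ne')
          rw [← hi0] at hmin
          push_neg at hmin
          have : (n + 1 + ((i0 - 1 : ℕ) : ℤ)) = n + (i0 : ℤ) := by omega
          rwa [this] at hmin
      · have : (n + (i0:ℤ) + 1) = n + 1 + (i0:ℤ) := by ring
        rwa [this]
    -- upper bound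
    have upper : (∫⁻ s in Iab (x n) b, Wf w b (s : EReal) ^ γ * w s * h s)
        ≤ ((Cp * d₂) * (2:ℝ≥0∞) ^ α) * ∑' i : ℕ, auxT α x h (n + 1 + i) := by
      calc (∫⁻ s in Iab (x n) b, Wf w b (s : EReal) ^ γ * w s * h s)
          ≤ ∫⁻ s in ⋃ i : ℕ, auxJJ b x (n + i) (n + i + 1),
              Wf w b (s : EReal) ^ γ * w s * h s := lintegral_mono_set cover
        _ ≤ ∑' i : ℕ, ∫⁻ s in auxJJ b x (n + i) (n + i + 1),
              Wf w b (s : EReal) ^ γ * w s * h s := lintegral_iUnion_le _ _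
        _ ≤ ∑' i : ℕ, ((Cp * d₂) * (2:ℝ≥0∞) ^ α) * auxT α x h (n + i + 1) :=
            ENNReal.tsum_le_tsum (fun i => key_ub (n + i) (by omega))
        _ = ((Cp * d₂) * (2:ℝ≥0∞) ^ α) * ∑' i : ℕ, auxT α x h (n + i + 1) :=
            ENNReal.tsum_mul_left
        _ = ((Cp * d₂) * (2:ℝ≥0∞) ^ α) * ∑' i : ℕ, auxT α x h (n + 1 + i) := by
            congr 1
            exact tsum_congr (fun i => by rw [show (n + (i:ℤ) + 1) = n + 1 + i by ring])
    -- lower bound, per piece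
    have key_lb : ∀ j : ℕ,
        (Cm * ε) * auxT α x h (n + ((j:ℤ) + 1) * m)
          ≤ ∫⁻ s in auxJJ b x (n + ((j:ℤ) + 1) * m) (n + ((j:ℤ) + 2) * m),
              Wf w b (s : EReal) ^ γ * w s * h s := by
      intro j
      set k : ℤ := n + ((j:ℤ) + 1) * m with hkdef
      set k' : ℤ := n + ((j:ℤ) + 2) * m with hk'def
      have h1m : (1:ℤ) ≤ ((j:ℤ) + 1) * m := by
        nlinarith [hm1, Int.natCast_nonneg j]
      have hkN : N < k := by rw [hkdef]; linarith
      have hknlt : n < k := by rw [hkdef]; linarith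
      have hkk' : k' = k + m := by rw [hkdef, hk'def]; ring
      have hk'N : N < k' := by rw [hkk']; linarith
      set C : ℝ≥0∞ := Cm * ((2:ℝ≥0∞) ^ (-(k:ℝ))) ^ γ * h ((x k).toReal) with hC
      have hCne : C ≠ ⊤ :=
        ENNReal.mul_ne_top (ENNReal.mul_ne_top hCmt
          (aux_rpow_ne_top (aux_two_rpow_ne_zero _) (aux_two_rpow_ne_top _) _))
          (hfin k hknlt)
      have hpt : ∀ s ∈ auxJJ b x k k',
          C * w s ≤ Wf w b (s : EReal) ^ γ * w s * h s := by
        intro s hs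
        obtain ⟨hs1, hs2, hs3⟩ := hs
        have hWle : Wf w b s ≤ d₂ * 2 ^ (-(k:ℝ)) := hWub k hkN.le s hs1
        have hWge : (d₁ * 2 ^ (-(m:ℝ))) * 2 ^ (-(k:ℝ)) ≤ Wf w b s := by
          refine le_trans (le_of_eq ?_) (hWlb k' hk'N.le s hs2)
          rw [mul_assoc, ← aux_two_rpow_add]
          congr 2
          rw [hkk']
          push_cast
          ring
        have hrp : Cm * ((2:ℝ≥0∞) ^ (-(k:ℝ))) ^ γ ≤ Wf w b (s : EReal) ^ γ := by
          refine le_trans ?_ (aux_sandwich_lo γ hWge hWle)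
          rw [ENNReal.mul_rpow_of_ne_top hd₁mnet (aux_two_rpow_ne_top _),
            ENNReal.mul_rpow_of_ne_top hd₂.ne (aux_two_rpow_ne_top _)]
          exact le_min (mul_le_mul_left (hCmdef ▸ min_le_left _ _) _)
            (mul_le_mul_left (hCmdef ▸ min_le_right _ _) _)
        have hh : h ((x k).toReal) ≤ h s := by
          refine hmono (hmem k hkN) (smem k hkN.le s hs1 hs3) ?_
          rw [← EReal.coe_le_coe_iff, hcoe k hkN]
          exact hs1.le
        calc C * w s = (Cm * ((2:ℝ≥0∞) ^ (-(k:ℝ))) ^ γ) * h ((x k).toReal) * w s := by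
              rw [hC]
          _ ≤ Wf w b (s : EReal) ^ γ * h s * w s :=
              mul_le_mul_left (mul_le_mul' hrp hh) _
          _ = Wf w b (s : EReal) ^ γ * w s * h s := by ring
      -- mass of the piece
      have hmass : ε * (2:ℝ≥0∞) ^ (-(k:ℝ)) ≤ ∫⁻ s in auxJJ b x k k', w s := by
        have hcov2 : Iab (x k) b ⊆ (auxJJ b x k k') ∪ Iab (x k') b := by
          intro s hs
          rcases le_or_gt (s:EReal) (x k') with hle | hlt
          · exact Or.inl ⟨hs.1, hle, hs.2⟩
          · exact Or.inr ⟨hlt, hs.2⟩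
        have h1 : Wf w b (x k) ≤ (∫⁻ s in auxJJ b x k k', w s) + Wf w b (x k') :=
          le_trans (lintegral_mono_set hcov2) (lintegral_union_le _ _ _)
        have h2 : d₁ * 2 ^ (-(k:ℝ)) - d₂ * 2 ^ (-(k':ℝ)) ≤ ∫⁻ s in auxJJ b x k k', w s :=
          le_trans (tsub_le_tsub (hWbd k hkN.le).1 (hWbd k' hk'N.le).2)
            (tsub_le_iff_right.2 h1)
        refine le_trans (le_of_eq ?_) h2
        have e2 : (2:ℝ≥0∞) ^ (-(k':ℝ)) = 2 ^ (-(k:ℝ)) * 2 ^ (-(m:ℝ)) := by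
          rw [← aux_two_rpow_add]
          congr 1
          rw [hkk']
          push_cast
          ring
        rw [e2, hεdef, mul_comm ε, ENNReal.mul_sub (fun _ _ => aux_two_rpow_ne_top _)]
        congr 1
        · ring
        · ring
      calc (Cm * ε) * auxT α x h k
          = C * (ε * (2:ℝ≥0∞) ^ (-(k:ℝ))) := by
            rw [hC, auxT, ← l1 k]
            ring
        _ ≤ C * ∫⁻ s in auxJJ b x k k', w s := mul_le_mul_right hmass _
        _ = ∫⁻ s in auxJJ b x k k', C * w s := (lintegral_const_mul' _ _ hCne).symm
        _ ≤ ∫⁻ s in auxJJ b x k k', Wf w b (s : EReal) ^ γ * w s * h s :=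
            setLIntegral_mono' (auxJJ_meas _ _ _ _) hpt
    -- disjointness of the lower pieces
    have hdisjlt : ∀ i j : ℕ, i < j →
        Disjoint (auxJJ b x (n + ((i:ℤ) + 1) * m) (n + ((i:ℤ) + 2) * m))
          (auxJJ b x (n + ((j:ℤ) + 1) * m) (n + ((j:ℤ) + 2) * m)) := by
      intro i j hij
      rw [Set.disjoint_left]
      rintro s ⟨_, h2, _⟩ ⟨h1', _, _⟩
      have hle : x (n + ((i:ℤ) + 2) * m) ≤ x (n + ((j:ℤ) + 1) * m) := by
        refine xle _ _ ?_ ?_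
        · have : (0:ℤ) ≤ ((i:ℤ) + 2) * m := mul_nonneg (by positivity) (by positivity)
          linarith
        · have : ((i:ℤ) + 2) * m ≤ ((j:ℤ) + 1) * m :=
            mul_le_mul_of_nonneg_right (by omega) (by positivity)
          linarith
      exact absurd (lt_of_le_of_lt (h2.trans hle) h1') (lt_irrefl _)
    have hdisj : Pairwise (Function.onFun Disjoint <|
        fun j : ℕ => auxJJ b x (n + ((j:ℤ) + 1) * m) (n + ((j:ℤ) + 2) * m)) := by
      intro i j hij
      rcases hij.lt_or_gt with hlt | hlt
      · exact hdisjlt i j hlt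
      · exact (hdisjlt j i hlt).symm
    have hKsub : (⋃ j : ℕ, auxJJ b x (n + ((j:ℤ) + 1) * m) (n + ((j:ℤ) + 2) * m))
        ⊆ Iab (x n) b := by
      intro s hs
      obtain ⟨j, hj⟩ := mem_iUnion.1 hs
      obtain ⟨h1, _, h3⟩ := hj
      refine ⟨lt_of_le_of_lt ?_ h1, h3⟩
      refine xle n _ hn ?_
      have : (0:ℤ) ≤ ((j:ℤ) + 1) * m := mul_nonneg (by positivity) (by positivity)
      linarith
    -- regrouping of the sum
    have hregroup : (∑' i : ℕ, auxT α x h (n + 1 + i))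
        ≤ Mden * ∑' j : ℕ, auxT α x h (n + ((j:ℤ) + 1) * m) := by
      have hmm : NeZero m := ⟨Nat.succ_ne_zero m'⟩
      have e := Equiv.tsum_eq (Nat.divModEquiv m).symm (fun i : ℕ => auxT α x h (n + 1 + i))
      rw [← e]
      have e2 : (∑' p : ℕ × Fin m, auxT α x h (n + 1 + ((Nat.divModEquiv m).symm p : ℕ)))
          = ∑' j : ℕ, ∑' r : Fin m, auxT α x h (n + 1 + ((j * m + (r:ℕ) : ℕ) : ℤ)) := by
        rw [← ENNReal.tsum_prod]
        rfl
      rw [e2]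
      have per : ∀ (j : ℕ) (r : ℕ), r < m →
          auxT α x h (n + 1 + ((j * m + r : ℕ) : ℤ))
            ≤ (2:ℝ≥0∞) ^ (((m:ℝ) - 1) * α) * auxT α x h (n + ((j:ℤ) + 1) * m) := by
        intro j r hr
        have hjm : (0:ℤ) ≤ (j:ℤ) * m := mul_nonneg (by positivity) (by positivity)
        have hr0 : (0:ℤ) ≤ (r:ℤ) := by positivity
        have hrm : (r:ℤ) ≤ (m:ℤ) - 1 := by omega
        have hidx : (n + 1 + ((j * m + r : ℕ) : ℤ)) = n + 1 + (j:ℤ) * m + r := by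
          push_cast; ring
        set k : ℤ := n + 1 + (j:ℤ) * m + r with hkdef
        set k2 : ℤ := n + ((j:ℤ) + 1) * m with hk2def
        have hexpand : k2 = n + (j:ℤ) * m + m := by rw [hk2def]; ring
        have hkk2 : k ≤ k2 := by rw [hkdef]; linarith
        have hk2k : k2 ≤ k + ((m:ℤ) - 1) := by rw [hkdef]; linarith
        have hkN : N < k := by rw [hkdef]; linarith
        have hk2N : N < k2 := lt_of_lt_of_le hkN hkk2
        rw [hidx]
        have hAB : -((k:ℝ)) ≤ ((m:ℝ) - 1) + -((k2:ℝ)) := by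
          have hcast : ((k2:ℤ):ℝ) ≤ ((k:ℤ):ℝ) + ((m:ℝ) - 1) := by exact_mod_cast hk2k
          linarith
        have hexp : -((k:ℝ) * α) ≤ (((m:ℝ) - 1) * α) + -((k2:ℝ) * α) := by
          nlinarith [mul_le_mul_of_nonneg_right hAB hα.le]
        have factor1 : (2:ℝ≥0∞) ^ (-((k:ℝ) * α))
            ≤ (2:ℝ≥0∞) ^ (((m:ℝ) - 1) * α) * (2:ℝ≥0∞) ^ (-((k2:ℝ) * α)) := by
          rw [← aux_two_rpow_add]
          exact ENNReal.rpow_le_rpow_of_exponent_le one_le_two hexp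
        have factor2 : h ((x k).toReal) ≤ h ((x k2).toReal) :=
          hmono (hmem k hkN) (hmem k2 hk2N)
            (EReal.toReal_le_toReal (xle k k2 (by linarith) hkk2)
              (hxfin k hkN).1 (hxfin k2 hk2N).2)
        calc auxT α x h k = (2:ℝ≥0∞) ^ (-((k:ℝ) * α)) * h ((x k).toReal) := rfl
          _ ≤ ((2:ℝ≥0∞) ^ (((m:ℝ) - 1) * α) * (2:ℝ≥0∞) ^ (-((k2:ℝ) * α))) * h ((x k2).toReal) :=
              mul_le_mul' factor1 factor2
          _ = (2:ℝ≥0∞) ^ (((m:ℝ) - 1) * α) * auxT α x h k2 := by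
              simp only [auxT]; ring
      calc (∑' j : ℕ, ∑' r : Fin m, auxT α x h (n + 1 + ((j * m + (r:ℕ) : ℕ) : ℤ)))
          ≤ ∑' j : ℕ, (m : ℝ≥0∞) *
              ((2:ℝ≥0∞) ^ (((m:ℝ) - 1) * α) * auxT α x h (n + ((j:ℤ) + 1) * m)) := by
            refine ENNReal.tsum_le_tsum (fun j => ?_)
            rw [tsum_fintype]
            refine le_trans (Finset.sum_le_sum (fun r _ => per j (r:ℕ) r.2)) ?_
            rw [Finset.sum_const, Finset.card_univ, Fintype.card_fin, nsmul_eq_mul]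
        _ = ∑' j : ℕ, Mden * auxT α x h (n + ((j:ℤ) + 1) * m) := by
            refine tsum_congr (fun j => ?_)
            rw [hMdendef, mul_assoc]
        _ = Mden * ∑' j : ℕ, auxT α x h (n + ((j:ℤ) + 1) * m) := ENNReal.tsum_mul_left
    constructor
    · -- lower bound
      calc (Cm * ε) * Mden⁻¹ * (∑' i : ℕ, auxT α x h (n + 1 + i))
          ≤ (Cm * ε) * Mden⁻¹ * (Mden * ∑' j : ℕ, auxT α x h (n + ((j:ℤ) + 1) * m)) :=
            mul_le_mul_right hregroup _
        _ = (Cm * ε) * ∑' j : ℕ, auxT α x h (n + ((j:ℤ) + 1) * m) := by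
            rw [mul_assoc, ← mul_assoc Mden⁻¹, ENNReal.inv_mul_cancel hM0 hMt, one_mul]
        _ = ∑' j : ℕ, (Cm * ε) * auxT α x h (n + ((j:ℤ) + 1) * m) :=
            ENNReal.tsum_mul_left.symm
        _ ≤ ∑' j : ℕ, ∫⁻ s in auxJJ b x (n + ((j:ℤ) + 1) * m) (n + ((j:ℤ) + 2) * m),
              Wf w b (s : EReal) ^ γ * w s * h s := ENNReal.tsum_le_tsum key_lb
        _ = ∫⁻ s in ⋃ j : ℕ, auxJJ b x (n + ((j:ℤ) + 1) * m) (n + ((j:ℤ) + 2) * m),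
              Wf w b (s : EReal) ^ γ * w s * h s :=
            (lintegral_iUnion (fun j => auxJJ_meas _ _ _ _) hdisj _).symm
        _ ≤ ∫⁻ s in Iab (x n) b, Wf w b (s : EReal) ^ γ * w s * h s :=
            lintegral_mono_set hKsub
    · exact upper
end
end

section
/- Let -∞ ≤ a < b ≤ ∞, let α > 0, let w be a weight on (a,b) with 0 < W(t) := ∫_t^b w < ∞ for all t ∈ (a,b), and let {x_k}_{k=N}^∞ (N ∈ ℤ) be a discretizing sequence of W, i.e. a strictly increasing sequence in [a,b] with x_N = a and d₁ 2^{-k} ≤ W(x_k) ≤ d₂ 2^{-k} for all k ≥ N, for some constants 0 < d₁ ≤ d₂. Then there exist positive constants c₁, c₂ (depending only on α, d₁, d₂) such that for every n ≥ N and every nonnegative nondecreasing function h on (a,b): c₁ · sup_{k≥n+1} 2^{-kα} h(x_k) ≤ ess sup_{x∈(x_n,b)} W(x)^α h(x) ≤ c₂ · sup_{k≥n+1} 2^{-kα} h(x_k). -/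
open MeasureTheory ENNReal Set

noncomputable section

lemma Iab_subset {a a' b b' : EReal} (ha : a' ≤ a) (hb : b ≤ b') : Iab a b ⊆ Iab a' b' :=
  fun _ hs => ⟨lt_of_le_of_lt ha hs.1, lt_of_lt_of_le hs.2 hb⟩

lemma Wf_anti {w : ℝ → ℝ≥0∞} {b : EReal} {s t : EReal} (hst : s ≤ t) :
    Wf w b t ≤ Wf w b s :=
  lintegral_mono_set (Iab_subset hst le_rfl)

lemma measurableSet_Iab (a b : EReal) : MeasurableSet (Iab a b) := by
  have : Iab a b = ((↑) : ℝ → EReal) ⁻¹' (Set.Ioo a b) := rfl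
  rw [this]
  exact continuous_coe_real_ereal.measurable measurableSet_Ioo

lemma two_rpow_add (p q : ℝ) : (2 : ℝ≥0∞) ^ (p + q) = 2 ^ p * 2 ^ q :=
  ENNReal.rpow_add _ _ two_ne_zero (by norm_num)

theorem statement14 (α : ℝ) (hα : 0 < α) (d₁ d₂ : ℝ≥0∞) (hd₁ : 0 < d₁) (hd₂ : d₂ < ∞)
    (hd : d₁ ≤ d₂) :
    ∃ c₁ c₂ : ℝ≥0∞, 0 < c₁ ∧ c₂ < ∞ ∧
      ∀ (a b : EReal), a < b →
      ∀ w : ℝ → ℝ≥0∞, Measurable w →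
        (∀ x ∈ Iab a b, 0 < w x ∧ w x < ∞) →
        (∀ t ∈ Iab a b, 0 < Wf w b (t : EReal) ∧ Wf w b (t : EReal) < ∞) →
      ∀ (N : ℤ) (x : ℤ → EReal),
        x N = a →
        (∀ k, N ≤ k → x k < x (k + 1)) →
        (∀ k, N ≤ k → a ≤ x k ∧ x k ≤ b) →
        (∀ k, N < k → x k ≠ ⊥ ∧ x k ≠ ⊤) →
        (∀ k, N ≤ k → d₁ * (2 : ℝ≥0∞) ^ (-(k : ℝ)) ≤ Wf w b (x k) ∧
          Wf w b (x k) ≤ d₂ * (2 : ℝ≥0∞) ^ (-(k : ℝ))) →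
        ∀ n : ℤ, N ≤ n →
        ∀ h : ℝ → ℝ≥0∞, MonotoneOn h (Iab a b) →
          c₁ * (⨆ (k : ℤ) (_ : n < k),
                (2 : ℝ≥0∞) ^ (-((k : ℝ) * α)) * h (x k).toReal) ≤
              essSup (fun s : ℝ => Wf w b (s : EReal) ^ α * h s)
                (volume.restrict (Iab (x n) b)) ∧
            essSup (fun s : ℝ => Wf w b (s : EReal) ^ α * h s)
                (volume.restrict (Iab (x n) b)) ≤
              c₂ * ⨆ (k : ℤ) (_ : n < k),
                (2 : ℝ≥0∞) ^ (-((k : ℝ) * α)) * h (x k).toReal := by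
  have hd₁top : d₁ ≠ ⊤ := (lt_of_le_of_lt hd hd₂).ne
  refine ⟨d₁ ^ α * (2 : ℝ≥0∞) ^ (-α), d₂ ^ α * (2 : ℝ≥0∞) ^ α, ?_, ?_, ?_⟩
  · exact mul_pos (ENNReal.rpow_pos hd₁ hd₁top).ne'
      (ENNReal.rpow_pos (by norm_num) (by norm_num)).ne'
  · exact ENNReal.mul_lt_top (ENNReal.rpow_lt_top_of_nonneg hα.le hd₂.ne)
      (ENNReal.rpow_lt_top_of_nonneg hα.le (by norm_num))
  intro a b hab w hw hwpos hW N x hxN hinc hmem hfin hWx n hn h hmono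
  classical
  -- strict monotonicity of x on [N, ∞)
  have hlt : ∀ j k : ℤ, N ≤ j → j < k → x j < x k := by
    intro j k hj hjk
    have H : ∀ k, j + 1 ≤ k → x j < x k := by
      refine Int.le_induction ?_ ?_
      · exact hinc j hj
      · intro k hk ih
        exact ih.trans (hinc k (by omega))
    exact H k (by omega)
  have hle : ∀ j k : ℤ, N ≤ j → j ≤ k → x j ≤ x k := by
    intro j k hj hjk
    rcases eq_or_lt_of_le hjk with rfl | hjk
    · exact le_rfl
    · exact (hlt j k hj hjk).le
  -- every x k with k ≥ N is < b, every x k with k > N is > a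
  have hxb : ∀ k, N ≤ k → x k < b :=
    fun k hk => lt_of_lt_of_le (hinc k hk) (hmem (k + 1) (by omega)).2
  have hxa : ∀ k, N < k → a < x k := fun k hk => hxN ▸ hlt N k le_rfl hk
  -- coercion facts
  have hcoe : ∀ k, N < k → ((x k).toReal : EReal) = x k :=
    fun k hk => EReal.coe_toReal (hfin k hk).2 (hfin k hk).1
  have hmemIab : ∀ k, N < k → (x k).toReal ∈ Iab a b := by
    intro k hk
    refine ⟨?_, ?_⟩ <;> rw [hcoe k hk]
    · exact hxa k hk
    · exact hxb k hk.le
  -- the supremum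
  set S : ℝ≥0∞ := ⨆ (k : ℤ) (_ : n < k), (2 : ℝ≥0∞) ^ (-((k : ℝ) * α)) * h (x k).toReal
    with hS
  set f : ℝ → ℝ≥0∞ := fun s : ℝ => Wf w b (s : EReal) ^ α * h s with hf
  set μ := volume.restrict (Iab (x n) b) with hμ
  constructor
  · -- lower bound
    rw [ENNReal.mul_iSup]
    refine iSup_le fun k => ?_
    rw [ENNReal.mul_iSup]
    refine iSup_le fun hk => ?_
    have hNk : N < k := lt_of_le_of_lt hn hk
    set r₁ := (x k).toReal with hr₁
    set r₂ := (x (k + 1)).toReal with hr₂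
    have hc₁ : (r₁ : EReal) = x k := hcoe k hNk
    have hc₂ : (r₂ : EReal) = x (k + 1) := hcoe (k + 1) (by omega)
    have hr12 : r₁ < r₂ := by
      rw [← EReal.coe_lt_coe_iff, hc₁, hc₂]; exact hinc k hNk.le
    have hAsub : Ioo r₁ r₂ ⊆ Iab (x n) b := by
      intro s hs
      constructor
      · calc x n ≤ x k := hle n k hn hk.le
          _ = (r₁ : EReal) := hc₁.symm
          _ < (s : EReal) := EReal.coe_lt_coe_iff.2 hs.1
      · calc (s : EReal) < (r₂ : EReal) := EReal.coe_lt_coe_iff.2 hs.2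
          _ = x (k + 1) := hc₂
          _ < b := hxb (k + 1) (by omega)
    have hμA : μ (Ioo r₁ r₂) ≠ 0 := by
      rw [hμ, Measure.restrict_apply measurableSet_Ioo,
        inter_eq_self_of_subset_left hAsub, Real.volume_Ioo]
      simp [ENNReal.ofReal_eq_zero, not_le, sub_pos, hr12]
    -- find a point of Ioo r₁ r₂ where f ≤ essSup f μ
    obtain ⟨s, hsA, hs_le⟩ : ∃ s ∈ Ioo r₁ r₂, f s ≤ essSup f μ := by
      by_contra hcon
      push_neg at hcon
      have h0 : μ {s | ¬ f s ≤ essSup f μ} = 0 := ae_iff.mp (ENNReal.ae_le_essSup f)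
      refine hμA (measure_mono_null ?_ h0)
      exact fun s hs => not_le.mpr (hcon s hs)
    -- memberships
    have hsIab : s ∈ Iab a b := Iab_subset (hxN ▸ hle N n le_rfl hn) le_rfl (hAsub hsA)
    have hh : h r₁ ≤ h s := hmono (hmemIab k hNk) hsIab hsA.1.le
    have hWs : d₁ * (2 : ℝ≥0∞) ^ (-((k : ℝ) + 1)) ≤ Wf w b (s : EReal) := by
      have h1 := (hWx (k + 1) (by omega)).1
      have h2 : Wf w b (x (k + 1)) ≤ Wf w b (s : EReal) := by
        refine Wf_anti ?_
        rw [← hc₂]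
        exact (EReal.coe_lt_coe_iff.2 hsA.2).le
      calc d₁ * (2 : ℝ≥0∞) ^ (-((k : ℝ) + 1))
          = d₁ * (2 : ℝ≥0∞) ^ (-(((k + 1 : ℤ) : ℝ))) := by push_cast; ring_nf
        _ ≤ Wf w b (x (k + 1)) := h1
        _ ≤ _ := h2
    have key : (d₁ * (2 : ℝ≥0∞) ^ (-((k : ℝ) + 1))) ^ α
        = d₁ ^ α * (2 : ℝ≥0∞) ^ (-α) * (2 : ℝ≥0∞) ^ (-((k : ℝ) * α)) := by
      rw [ENNReal.mul_rpow_of_nonneg _ _ hα.le, ← ENNReal.rpow_mul,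
        show (-((k : ℝ) + 1)) * α = -α + -((k : ℝ) * α) by ring, two_rpow_add, mul_assoc]
    calc d₁ ^ α * (2 : ℝ≥0∞) ^ (-α) * ((2 : ℝ≥0∞) ^ (-((k : ℝ) * α)) * h r₁)
        = (d₁ * (2 : ℝ≥0∞) ^ (-((k : ℝ) + 1))) ^ α * h r₁ := by rw [key]; ring
      _ ≤ Wf w b (s : EReal) ^ α * h s :=
          mul_le_mul' (ENNReal.rpow_le_rpow hWs hα.le) hh
      _ ≤ essSup f μ := hs_le
  · -- upper bound
    refine essSup_le_of_ae_le _ ?_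
    rw [Filter.EventuallyLE, hμ, ae_restrict_iff' (measurableSet_Iab _ _)]
    refine ae_of_all _ fun s hs => ?_
    have hsIab : s ∈ Iab a b := Iab_subset (hxN ▸ hle N n le_rfl hn) le_rfl hs
    have hWs := hW s hsIab
    -- there is K > n with s < x K
    have hK : ∃ K : ℤ, n < K ∧ (s : EReal) < x K := by
      have hd₂0 : d₂ ≠ 0 := (lt_of_lt_of_le hd₁ hd).ne'
      obtain ⟨m, hm⟩ := ENNReal.exists_inv_two_pow_lt
        (ENNReal.div_pos hWs.1.ne' hd₂.ne).ne'
      refine ⟨max (n + 1) (m : ℤ), lt_of_lt_of_le (lt_add_one n) (le_max_left _ _), ?_⟩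
      by_contra hcon
      push_neg at hcon
      set K := max (n + 1) (m : ℤ) with hKdef
      have h1 : Wf w b (s : EReal) ≤ Wf w b (x K) := Wf_anti hcon
      have h2 : Wf w b (x K) ≤ d₂ * (2 : ℝ≥0∞) ^ (-(K : ℝ)) :=
        (hWx K (by omega)).2
      have h3 : (2 : ℝ≥0∞) ^ (-(K : ℝ)) ≤ (2 : ℝ≥0∞)⁻¹ ^ m := by
        have : (2 : ℝ≥0∞) ^ (-(K : ℝ)) ≤ (2 : ℝ≥0∞) ^ (-(m : ℝ)) := by
          refine ENNReal.rpow_le_rpow_of_exponent_le one_le_two ?_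
          have : (m : ℝ) ≤ (K : ℝ) := by exact_mod_cast le_max_right (n + 1) (m : ℤ)
          linarith
        calc (2 : ℝ≥0∞) ^ (-(K : ℝ)) ≤ (2 : ℝ≥0∞) ^ (-(m : ℝ)) := this
          _ = ((2 : ℝ≥0∞) ^ (m : ℝ))⁻¹ := by rw [ENNReal.rpow_neg]
          _ = ((2 : ℝ≥0∞) ^ m)⁻¹ := by rw [ENNReal.rpow_natCast]
          _ = (2 : ℝ≥0∞)⁻¹ ^ m := ENNReal.inv_pow
      have h4 : d₂ * (2 : ℝ≥0∞)⁻¹ ^ m < Wf w b (s : EReal) :=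
        ENNReal.mul_lt_of_lt_div' hm
      have : Wf w b (s : EReal) < Wf w b (s : EReal) :=
        lt_of_le_of_lt (h1.trans (h2.trans (mul_le_mul_right h3 d₂))) h4
      exact lt_irrefl _ this
    -- least K > n with s < x K
    obtain ⟨m, ⟨hmn, hms⟩, hmin⟩ :=
      Int.exists_least_of_bdd (P := fun z => n < z ∧ (s : EReal) < x z)
        ⟨n, fun z hz => hz.1.le⟩ hK
    set k := m - 1 with hkdef
    have hkn : n ≤ k := by omega
    have hxks : x k ≤ (s : EReal) := by
      rcases eq_or_lt_of_le hkn with heq | hlt'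
      · rw [← heq]; exact hs.1.le
      · by_contra hcc
        push_neg at hcc
        have := hmin k ⟨hlt', hcc⟩
        omega
    -- bounds
    have hWub : Wf w b (s : EReal) ≤ d₂ * (2 : ℝ≥0∞) ^ (-(k : ℝ)) :=
      (Wf_anti hxks).trans (hWx k (by omega)).2
    set r₂ := (x (k + 1)).toReal with hr₂
    have hc₂ : (r₂ : EReal) = x (k + 1) := hcoe (k + 1) (by omega)
    have hsr₂ : s ≤ r₂ := by
      have : (s : EReal) < (r₂ : EReal) := by
        rw [hc₂, show k + 1 = m by omega]; exact hms
      exact (EReal.coe_lt_coe_iff.1 this).le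
    have hh : h s ≤ h r₂ := hmono hsIab (hmemIab (k + 1) (by omega)) hsr₂
    have key : (d₂ * (2 : ℝ≥0∞) ^ (-(k : ℝ))) ^ α
        = d₂ ^ α * (2 : ℝ≥0∞) ^ α * (2 : ℝ≥0∞) ^ (-(((k : ℝ) + 1) * α)) := by
      rw [ENNReal.mul_rpow_of_nonneg _ _ hα.le, ← ENNReal.rpow_mul,
        show (-(k : ℝ)) * α = α + -(((k : ℝ) + 1) * α) by ring, two_rpow_add, mul_assoc]
    have hexp : (-(((k : ℝ) + 1) * α)) = (-((((k + 1 : ℤ)) : ℝ) * α)) := by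
      push_cast; ring
    have hterm : (2 : ℝ≥0∞) ^ (-(((k : ℝ) + 1) * α)) * h r₂ ≤ S := by
      rw [hexp, hr₂]
      exact le_iSup₂ (f := fun (j : ℤ) (_ : n < j) =>
        (2 : ℝ≥0∞) ^ (-((j : ℝ) * α)) * h (x j).toReal) (k + 1) (show n < k + 1 by omega)
    calc f s = Wf w b (s : EReal) ^ α * h s := rfl
      _ ≤ (d₂ * (2 : ℝ≥0∞) ^ (-(k : ℝ))) ^ α * h r₂ :=
          mul_le_mul' (ENNReal.rpow_le_rpow hWub hα.le) hh
      _ = d₂ ^ α * (2 : ℝ≥0∞) ^ α * ((2 : ℝ≥0∞) ^ (-(((k : ℝ) + 1) * α)) * h r₂) := by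
          rw [key, mul_assoc]
      _ ≤ d₂ ^ α * (2 : ℝ≥0∞) ^ α * S := mul_le_mul_right hterm _
end
end
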